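/- arXiv:2602.12603 — 8 statements merged into one kernel-verified Lean document; each statement's English description precedes it below -/
import Mathlib

section
/- Let E = EuclideanSpace ℝ (Fin m) and let Q : E → ℝ be twice continuously differentiable with Hessian H(u) := ∇²Q(u) (a continuous symmetric bilinear form). Assume: (A1) there is L₂ > 0 with ‖H(u) − H(v)‖ ≤ L₂·‖u − v‖ in operator norm for all u, v ∈ E; the gradient of Q vanishes at u_ref, i.e., ∇Q(u_ref) = 0; define W(v,w) := −H(u_ref)(v,w) and the set 𝒮 := {u : W(u − u_ref, u − u_ref) ≤ D²} for some D > 0; (A2) there is μ > 0 such that H(u)(v,v) ≤ −μ²·‖v‖² for all u ∈ 𝒮 and all v ∈ E. Let 𝒰 ⊆ E, let u_W ∈ 𝒰 minimize u ↦ W(u − u_ref, u − u_ref) over 𝒰, let u⋆ ∈ 𝒰 maximize Q over 𝒰, and assume u_W ∈ 𝒮 and u⋆ ∈ 𝒮. Then |Q(u_W) − Q(u⋆)| ≤ L₂·D³/(3·μ³). -/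
open intervalIntegral in
lemma taylor_two {E : Type*} [NormedAddCommGroup E] [NormedSpace ℝ E]
    (Q : E → ℝ) (hQ : ContDiff ℝ 2 Q) (L : ℝ) (hL : 0 ≤ L)
    (hLip : ∀ u v, ‖fderiv ℝ (fderiv ℝ Q) u - fderiv ℝ (fderiv ℝ Q) v‖ ≤ L * ‖u - v‖)
    (a δ : E) :
    |Q (a + δ) - Q a - fderiv ℝ Q a δ - fderiv ℝ (fderiv ℝ Q) a δ δ / 2|
      ≤ L * ‖δ‖ ^ 3 / 6 := by
  set H := fderiv ℝ (fderiv ℝ Q) with hHdef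
  set p : ℝ → E := fun t => a + t • δ with hp
  have hp0 : p 0 = a := by simp [hp]
  have hp1 : p 1 = a + δ := by simp [hp]
  have hpath : ∀ t : ℝ, HasDerivAt p δ t := by
    intro t
    simpa [hp] using ((hasDerivAt_id t).smul_const δ).const_add a
  have hdQ : Differentiable ℝ Q := hQ.differentiable (by norm_num)
  have hdQ1 : ContDiff ℝ 1 (fderiv ℝ Q) := hQ.fderiv_right (by norm_num)
  have hfQ : ∀ u, HasFDerivAt (fderiv ℝ Q) (H u) u :=
    fun u => (hdQ1.differentiable one_ne_zero u).hasFDerivAt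
  set g1 : ℝ → ℝ := fun t => fderiv ℝ Q (p t) δ with hg1def
  set g2 : ℝ → ℝ := fun t => H (p t) δ δ with hg2def
  have hg : ∀ t : ℝ, HasDerivAt (fun t => Q (p t)) (g1 t) t := by
    intro t
    exact ((hdQ (p t)).hasFDerivAt).comp_hasDerivAt t (hpath t)
  have hg1 : ∀ t : ℝ, HasDerivAt g1 (g2 t) t := by
    intro t
    have h1 : HasDerivAt (fun t => fderiv ℝ Q (p t)) (H (p t) δ) t :=
      (hfQ (p t)).comp_hasDerivAt t (hpath t)
    have := h1.clm_apply (hasDerivAt_const t δ)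
    simpa using this
  -- continuity
  have hpc : Continuous p := by fun_prop
  have cg1 : Continuous g1 :=
    ((hdQ1.continuous).comp hpc).clm_apply continuous_const
  have cH : Continuous H := by
    rcases eq_or_lt_of_le hL with h0 | h0
    · have : ∀ u v : E, H u = H v := by
        intro u v
        have hz : ‖H u - H v‖ ≤ 0 := by simpa [← h0] using hLip u v
        have : H u - H v = 0 := (ContinuousLinearMap.opNorm_zero_iff _).mp (le_antisymm hz (norm_nonneg _))
        exact sub_eq_zero.mp this
      have : H = fun _ => H a := funext fun u => this u a
      rw [this]; exact continuous_const
    · exact (LipschitzWith.of_dist_le_mul (f := H) (K := ⟨L, hL⟩)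
        (fun x y => by rw [dist_eq_norm (E := E →L[ℝ] E →L[ℝ] ℝ), dist_eq_norm]; exact hLip x y)).continuous
  have cg2 : Continuous g2 :=
    ((cH.comp hpc).clm_apply continuous_const).clm_apply continuous_const
  -- pointwise bound on g2 - g2 0
  have hg2bound : ∀ s : ℝ, 0 ≤ s → |g2 s - g2 0| ≤ L * ‖δ‖ ^ 3 * s := by
    intro s hs
    have h1 : g2 s - g2 0 = ((H (p s) - H (p 0)) δ) δ := by
      simp [hg2def, ContinuousLinearMap.sub_apply]
    rw [h1]
    have h2 : |((H (p s) - H (p 0)) δ) δ| ≤ ‖H (p s) - H (p 0)‖ * ‖δ‖ * ‖δ‖ := by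
      calc |((H (p s) - H (p 0)) δ) δ| ≤ ‖(H (p s) - H (p 0)) δ‖ * ‖δ‖ :=
            ((H (p s) - H (p 0)) δ).le_opNorm δ
        _ ≤ ‖H (p s) - H (p 0)‖ * ‖δ‖ * ‖δ‖ :=
            mul_le_mul_of_nonneg_right ((H (p s) - H (p 0)).le_opNorm δ) (norm_nonneg δ)
    have h3 : ‖H (p s) - H (p 0)‖ ≤ L * (s * ‖δ‖) := by
      have := hLip (p s) (p 0)
      have hps : p s - p 0 = s • δ := by simp [hp]
      rw [hps] at this
      simpa [norm_smul, abs_of_nonneg hs] using this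
    calc |((H (p s) - H (p 0)) δ) δ| ≤ ‖H (p s) - H (p 0)‖ * ‖δ‖ * ‖δ‖ := h2
      _ ≤ L * (s * ‖δ‖) * ‖δ‖ * ‖δ‖ := by
          gcongr
      _ = L * ‖δ‖ ^ 3 * s := by ring
  -- inner FTC bound
  have hinner : ∀ t ∈ Set.Icc (0:ℝ) 1, |g1 t - g1 0 - g2 0 * t| ≤ L * ‖δ‖ ^ 3 * t ^ 2 / 2 := by
    intro t ht
    have hftc : ∫ s in (0:ℝ)..t, g2 s = g1 t - g1 0 :=
      integral_eq_sub_of_hasDerivAt (fun s _ => hg1 s) (cg2.intervalIntegrable 0 t)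
    have hconst : ∫ s in (0:ℝ)..t, g2 0 = g2 0 * t := by simp [mul_comm]
    have heq : g1 t - g1 0 - g2 0 * t = ∫ s in (0:ℝ)..t, (g2 s - g2 0) := by
      rw [intervalIntegral.integral_sub (cg2.intervalIntegrable 0 t)
        (intervalIntegrable_const), hftc, hconst]
    rw [heq]
    have hb : ‖∫ s in (0:ℝ)..t, (g2 s - g2 0)‖ ≤ |∫ s in (0:ℝ)..t, L * ‖δ‖ ^ 3 * s| := by
      apply intervalIntegral.norm_integral_le_abs_of_norm_le
      · filter_upwards [MeasureTheory.ae_restrict_mem measurableSet_Ioc] with s hs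
        rw [Set.uIoc_of_le ht.1] at hs
        exact (hg2bound s hs.1.le)
      · exact (by fun_prop : Continuous fun s : ℝ => L * ‖δ‖ ^ 3 * s).intervalIntegrable 0 t
    have hval : ∫ s in (0:ℝ)..t, L * ‖δ‖ ^ 3 * s = L * ‖δ‖ ^ 3 * t ^ 2 / 2 := by
      rw [intervalIntegral.integral_const_mul]
      rw [integral_id]
      ring
    rw [hval] at hb
    calc |∫ s in (0:ℝ)..t, (g2 s - g2 0)| ≤ |L * ‖δ‖ ^ 3 * t ^ 2 / 2| := hb
      _ = L * ‖δ‖ ^ 3 * t ^ 2 / 2 := by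
          rw [abs_of_nonneg]; positivity
  -- outer FTC
  have hftc2 : ∫ t in (0:ℝ)..1, g1 t = Q (a + δ) - Q a := by
    have h := integral_eq_sub_of_hasDerivAt (fun t _ => hg t) (cg1.intervalIntegrable 0 1)
    rw [hp0, hp1] at h
    exact h
  have heq2 : Q (a + δ) - Q a - fderiv ℝ Q a δ - H a δ δ / 2
      = ∫ t in (0:ℝ)..1, (g1 t - g1 0 - g2 0 * t) := by
    rw [intervalIntegral.integral_sub (by
        exact (cg1.sub continuous_const).intervalIntegrable 0 1)
      ((by fun_prop : Continuous fun t : ℝ => g2 0 * t).intervalIntegrable 0 1)]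
    rw [intervalIntegral.integral_sub (cg1.intervalIntegrable 0 1) intervalIntegrable_const]
    rw [hftc2, intervalIntegral.integral_const_mul, integral_id]
    have e1 : g1 0 = fderiv ℝ Q a δ := by simp [hg1def, hp0]
    have e2 : g2 0 = H a δ δ := by simp [hg2def, hp0]
    rw [e1, e2]
    simp
    ring
  rw [heq2]
  have hb : ‖∫ t in (0:ℝ)..1, (g1 t - g1 0 - g2 0 * t)‖
      ≤ |∫ t in (0:ℝ)..1, L * ‖δ‖ ^ 3 * t ^ 2 / 2| := by
    apply intervalIntegral.norm_integral_le_abs_of_norm_le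
    · filter_upwards [MeasureTheory.ae_restrict_mem measurableSet_Ioc] with t ht
      rw [Set.uIoc_of_le zero_le_one] at ht
      exact hinner t ⟨ht.1.le, ht.2⟩
    · exact (by fun_prop : Continuous fun t : ℝ => L * ‖δ‖ ^ 3 * t ^ 2 / 2).intervalIntegrable 0 1
  have hval : ∫ t in (0:ℝ)..1, L * ‖δ‖ ^ 3 * t ^ 2 / 2 = L * ‖δ‖ ^ 3 / 6 := by
    have : ∀ t : ℝ, L * ‖δ‖ ^ 3 * t ^ 2 / 2 = (L * ‖δ‖ ^ 3 / 2) * t ^ 2 := fun t => by ring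
    simp_rw [this]
    rw [intervalIntegral.integral_const_mul, integral_pow]
    norm_num
    ring
  rw [hval] at hb
  calc |∫ t in (0:ℝ)..1, (g1 t - g1 0 - g2 0 * t)| ≤ |L * ‖δ‖ ^ 3 / 6| := hb
    _ = L * ‖δ‖ ^ 3 / 6 := by rw [abs_of_nonneg]; positivity

set_option maxHeartbeats 1000000 in
/-- Theorem 1: Near-optimality of the Hessian-weighted
projection. Under a Lipschitz Hessian (A1), a vanishing gradient at `u_ref`,
and uniform negative definiteness of the Hessian on the weighted ball `𝒮`
(A2), the value gap between the weighted projection `u_W` and the safe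
optimal action `u⋆` is at most `L₂D³/(3μ³)`. -/
theorem weighted_projection_near_optimality
    (m : ℕ)
    (Q : EuclideanSpace ℝ (Fin m) → ℝ)
    (hQ : ContDiff ℝ 2 Q)
    (u_ref : EuclideanSpace ℝ (Fin m))
    (H : EuclideanSpace ℝ (Fin m) →
      EuclideanSpace ℝ (Fin m) →L[ℝ] EuclideanSpace ℝ (Fin m) →L[ℝ] ℝ)
    (hH : ∀ u, H u = fderiv ℝ (fderiv ℝ Q) u)
    (L₂ : ℝ) (hL₂ : 0 < L₂)
    (hLip : ∀ u v, ‖H u - H v‖ ≤ L₂ * ‖u - v‖)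
    (hgrad : fderiv ℝ Q u_ref = 0)
    (W : EuclideanSpace ℝ (Fin m) →L[ℝ] EuclideanSpace ℝ (Fin m) →L[ℝ] ℝ)
    (hW : W = -H u_ref)
    (D : ℝ) (hD : 0 < D)
    (S : Set (EuclideanSpace ℝ (Fin m)))
    (hS : S = {u | W (u - u_ref) (u - u_ref) ≤ D ^ 2})
    (μ : ℝ) (hμ : 0 < μ)
    (hcurv : ∀ u ∈ S, ∀ v : EuclideanSpace ℝ (Fin m),
      H u v v ≤ -μ ^ 2 * ‖v‖ ^ 2)
    (𝒰 : Set (EuclideanSpace ℝ (Fin m)))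
    (uW uStar : EuclideanSpace ℝ (Fin m))
    (huW𝒰 : uW ∈ 𝒰) (huStar𝒰 : uStar ∈ 𝒰)
    (huWmin : ∀ u ∈ 𝒰, W (uW - u_ref) (uW - u_ref) ≤ W (u - u_ref) (u - u_ref))
    (huStarmax : ∀ u ∈ 𝒰, Q u ≤ Q uStar)
    (huWS : uW ∈ S) (huStarS : uStar ∈ S) :
    |Q uW - Q uStar| ≤ L₂ * D ^ 3 / (3 * μ ^ 3) := by
  have hLip' : ∀ u v : EuclideanSpace ℝ (Fin m),
      ‖fderiv ℝ (fderiv ℝ Q) u - fderiv ℝ (fderiv ℝ Q) v‖ ≤ L₂ * ‖u - v‖ := by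
    intro u v; have := hLip u v; rwa [hH u, hH v] at this
  -- u_ref ∈ S
  have hrefS : u_ref ∈ S := by
    rw [hS]
    show W (u_ref - u_ref) (u_ref - u_ref) ≤ D ^ 2
    rw [sub_self]
    simp only [map_zero, ContinuousLinearMap.zero_apply]
    positivity
  -- coercivity of W
  have hWpos : ∀ v : EuclideanSpace ℝ (Fin m), μ ^ 2 * ‖v‖ ^ 2 ≤ W v v := by
    intro v
    have := hcurv u_ref hrefS v
    rw [hW]
    simp only [ContinuousLinearMap.neg_apply]
    linarith
  -- norm bound on S
  have hnorm : ∀ u ∈ S, ‖u - u_ref‖ ^ 3 ≤ D ^ 3 / μ ^ 3 := by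
    intro u hu
    rw [hS] at hu
    have h1 : μ ^ 2 * ‖u - u_ref‖ ^ 2 ≤ D ^ 2 := le_trans (hWpos _) hu
    have h2 : μ * ‖u - u_ref‖ ≤ D := by
      nlinarith [norm_nonneg (u - u_ref), mul_nonneg hμ.le (norm_nonneg (u - u_ref))]
    have h3 : (μ * ‖u - u_ref‖) ^ 3 ≤ D ^ 3 :=
      pow_le_pow_left₀ (mul_nonneg hμ.le (norm_nonneg _)) h2 3
    rw [le_div_iff₀ (by positivity)]
    calc ‖u - u_ref‖ ^ 3 * μ ^ 3 = (μ * ‖u - u_ref‖) ^ 3 := by ring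
      _ ≤ D ^ 3 := h3
  -- Taylor bound
  have tay : ∀ u ∈ S,
      |Q u - Q u_ref + W (u - u_ref) (u - u_ref) / 2| ≤ L₂ * D ^ 3 / (6 * μ ^ 3) := by
    intro u hu
    have h := taylor_two Q hQ L₂ hL₂.le hLip' u_ref (u - u_ref)
    have e0 : u_ref + (u - u_ref) = u := by abel
    rw [e0, hgrad] at h
    have e1 : fderiv ℝ (fderiv ℝ Q) u_ref (u - u_ref) (u - u_ref)
        = -(W (u - u_ref) (u - u_ref)) := by
      rw [← hH u_ref, hW]
      simp only [ContinuousLinearMap.neg_apply, neg_neg]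
    rw [e1] at h
    simp only [ContinuousLinearMap.zero_apply, sub_zero] at h
    have h' : |Q u - Q u_ref + W (u - u_ref) (u - u_ref) / 2| ≤ L₂ * ‖u - u_ref‖ ^ 3 / 6 := by
      have : Q u - Q u_ref - -(W (u - u_ref) (u - u_ref)) / 2
          = Q u - Q u_ref + W (u - u_ref) (u - u_ref) / 2 := by ring
      rwa [this] at h
    refine h'.trans ?_
    have hx : ‖u - u_ref‖ ^ 3 * μ ^ 3 ≤ D ^ 3 := (le_div_iff₀ (by positivity)).mp (hnorm u hu)
    rw [div_le_div_iff₀ (by norm_num) (by positivity)]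
    nlinarith [mul_le_mul_of_nonneg_left hx hL₂.le]
  have hW1 := tay uW huWS
  have hW2 := tay uStar huStarS
  have hmin := huWmin uStar huStar𝒰
  have hmax := huStarmax uW huW𝒰
  rw [abs_sub_comm, abs_of_nonneg (by linarith)]
  have a1 := abs_le.mp hW1
  have a2 := abs_le.mp hW2
  have key : L₂ * D ^ 3 / (3 * μ ^ 3) = 2 * (L₂ * D ^ 3 / (6 * μ ^ 3)) := by
    field_simp; ring
  rw [key]
  linarith [a1.1, a1.2, a2.1, a2.2]
end

section
/- Let E = EuclideanSpace ℝ (Fin m) and let Q : E → ℝ be twice continuously differentiable with Hessian H(u) := ∇²Q(u). Assume ‖H(u) − H(v)‖ ≤ L₂·‖u − v‖ for all u, v (L₂ > 0), ∇Q(u_ref) = 0, W := −H(u_ref), 𝒮 := {u : W(u − u_ref, u − u_ref) ≤ D²} with D > 0, and H(u)(v,v) ≤ −μ²·‖v‖² for all u ∈ 𝒮 and all v (μ > 0). Let 𝒰 ⊆ E, let u_W ∈ 𝒰 minimize u ↦ W(u − u_ref, u − u_ref) over 𝒰, let u_I ∈ 𝒰, and assume u_W, u_I ∈ 𝒮. Write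 δ := ‖u_W − u_ref‖_W, suppose δ > 0, suppose ‖u_I − u_ref‖_W = β·δ for some β > 1, and set c := (β² − 1)/2. Then Q(u_W) − Q(u_I) ≥ c·δ² − L₂·D³/(3·μ³). -/
open Set in
/-- 1D second-order Taylor bound with Lipschitz-type second derivative. -/
lemma taylor1d (g g' g'' : ℝ → ℝ)
    (hg : ∀ t, HasDerivAt g (g' t) t)
    (hg' : ∀ t, HasDerivAt g' (g'' t) t)
    (h0 : g' 0 = 0) (K : ℝ)
    (hb : ∀ t ∈ Icc (0:ℝ) 1, |g'' t - g'' 0| ≤ K * t) :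
    |g 1 - g 0 - g'' 0 / 2| ≤ K / 6 := by
  -- step 1: bound φ t = g' t - t * g'' 0 by K t²/2
  set a := g'' 0 with ha
  have hφ : ∀ t ∈ Icc (0:ℝ) 1, |g' t - t * a| ≤ K * t ^ 2 / 2 := by
    have := image_norm_le_of_norm_deriv_right_le_deriv_boundary
      (f := fun t => g' t - t * a) (f' := fun t => g'' t - a) (a := 0) (b := 1)
      (B := fun t => K * t ^ 2 / 2) (B' := fun t => K * t)
      (fun t _ => ((hg' t).sub ((hasDerivAt_id t).mul_const a)).continuousAt.continuousWithinAt)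
      (fun t ht => by
        have h : HasDerivAt (fun t => g' t - t * a) (g'' t - a) t := by
          exact ((hg' t).sub ((hasDerivAt_id' t).mul_const a)).congr_deriv (by ring)
        exact h.hasDerivWithinAt)
      ?_ ?_ ?_
    · intro t ht
      simpa using this ht
    · simp [h0]
    · intro t
      have : HasDerivAt (fun t : ℝ => K * t ^ 2 / 2) (K * (2 * t) / 2) t := by
        simpa using (((hasDerivAt_pow 2 t).const_mul K).div_const 2)
      convert this using 1; ring
    · intro t ht
      have := hb t ⟨ht.1, ht.2.le⟩
      simpa [Real.norm_eq_abs, one_mul] using this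
  -- step 2: bound ψ t = g t - g 0 - t²/2 * a by K t³/6
  have hψ : ∀ t ∈ Icc (0:ℝ) 1, |g t - g 0 - t ^ 2 / 2 * a| ≤ K * t ^ 3 / 6 := by
    have := image_norm_le_of_norm_deriv_right_le_deriv_boundary
      (f := fun t => g t - g 0 - t ^ 2 / 2 * a) (f' := fun t => g' t - t * a) (a := 0) (b := 1)
      (B := fun t => K * t ^ 3 / 6) (B' := fun t => K * t ^ 2 / 2)
      ?_ ?_ ?_ ?_ ?_
    · intro t ht; simpa using this ht
    · intro t _
      have h : HasDerivAt (fun t : ℝ => g t - g 0 - t ^ 2 / 2 * a) (g' t - t * a) t := by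
        have := ((hg t).sub_const (g 0)).sub (((hasDerivAt_pow 2 t).div_const 2).mul_const a)
        refine this.congr_deriv ?_; push_cast; ring
      exact h.continuousAt.continuousWithinAt
    · intro t ht
      have h : HasDerivAt (fun t : ℝ => g t - g 0 - t ^ 2 / 2 * a) (g' t - t * a) t := by
        have := ((hg t).sub_const (g 0)).sub (((hasDerivAt_pow 2 t).div_const 2).mul_const a)
        refine this.congr_deriv ?_; push_cast; ring
      exact h.hasDerivWithinAt
    · simp
    · intro t
      have : HasDerivAt (fun t : ℝ => K * t ^ 3 / 6) (K * (3 * t ^ 2) / 6) t := by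
        simpa using (((hasDerivAt_pow 3 t).const_mul K).div_const 6)
      convert this using 1; ring
    · intro t ht
      simpa [Real.norm_eq_abs] using hφ t ⟨ht.1, ht.2.le⟩
  have := hψ 1 (by norm_num)
  rw [show a / 2 = (1:ℝ) ^ 2 / 2 * a by ring]
  simpa using this


open Set in
lemma taylorE (Q : EuclideanSpace ℝ (Fin m) → ℝ) (hQ : ContDiff ℝ 2 Q)
    (H : EuclideanSpace ℝ (Fin m) →
      EuclideanSpace ℝ (Fin m) →L[ℝ] EuclideanSpace ℝ (Fin m) →L[ℝ] ℝ)
    (hH : ∀ u, H u = fderiv ℝ (fderiv ℝ Q) u)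
    (L₂ : ℝ)
    (hLip : ∀ u v, ‖H u - H v‖ ≤ L₂ * ‖u - v‖)
    (u_ref : EuclideanSpace ℝ (Fin m))
    (hgrad : fderiv ℝ Q u_ref = 0)
    (v : EuclideanSpace ℝ (Fin m)) :
    |Q (u_ref + v) - Q u_ref - H u_ref v v / 2| ≤ L₂ * ‖v‖ ^ 3 / 6 := by
  set line : ℝ → EuclideanSpace ℝ (Fin m) := fun t => u_ref + t • v with hline
  have hlderiv : ∀ t : ℝ, HasDerivAt line v t := by
    intro t
    exact (((hasDerivAt_id' t).smul_const v).const_add u_ref).congr_deriv (by simp)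
  have hQdiff : Differentiable ℝ Q := hQ.differentiable (by norm_num)
  have hFdiff : Differentiable ℝ (fderiv ℝ Q) :=
    (hQ.fderiv_right (m := 1) (by norm_num)).differentiable (by norm_num)
  set g : ℝ → ℝ := fun t => Q (line t) with hg
  set g' : ℝ → ℝ := fun t => fderiv ℝ Q (line t) v with hg'
  set g'' : ℝ → ℝ := fun t => H (line t) v v with hg''
  have hd1 : ∀ t, HasDerivAt g (g' t) t := fun t =>
    ((hQdiff (line t)).hasFDerivAt).comp_hasDerivAt t (hlderiv t)
  have hd2 : ∀ t, HasDerivAt g' (g'' t) t := by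
    intro t
    have h1 : HasDerivAt (fun t => fderiv ℝ Q (line t)) (H (line t) v) t := by
      have := ((hFdiff (line t)).hasFDerivAt).comp_hasDerivAt t (hlderiv t)
      rw [hH]; exact this
    have h2 := ((ContinuousLinearMap.apply ℝ ℝ v).hasFDerivAt).comp_hasDerivAt t h1
    exact h2
  have h0 : g' 0 = 0 := by simp [hg', hline, hgrad]
  have hb : ∀ t ∈ Icc (0:ℝ) 1, |g'' t - g'' 0| ≤ (L₂ * ‖v‖ ^ 3) * t := by
    intro t ht
    have h1 : g'' t - g'' 0 = (H (line t) - H (line 0)) v v := by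
      simp [hg'', ContinuousLinearMap.sub_apply]
    rw [h1]
    calc |(H (line t) - H (line 0)) v v| ≤ ‖H (line t) - H (line 0)‖ * ‖v‖ * ‖v‖ := by
          have h1 := ((H (line t) - H (line 0)) v).le_opNorm v
          have h2 := ContinuousLinearMap.le_opNorm (H (line t) - H (line 0)) v
          calc |(H (line t) - H (line 0)) v v| ≤ ‖(H (line t) - H (line 0)) v‖ * ‖v‖ := by
                simpa [Real.norm_eq_abs] using h1
            _ ≤ ‖H (line t) - H (line 0)‖ * ‖v‖ * ‖v‖ :=
                mul_le_mul_of_nonneg_right h2 (norm_nonneg v)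
      _ ≤ (L₂ * ‖line t - line 0‖) * ‖v‖ * ‖v‖ := by
          apply mul_le_mul_of_nonneg_right _ (norm_nonneg v)
          exact mul_le_mul_of_nonneg_right (hLip _ _) (norm_nonneg v)
      _ = (L₂ * ‖v‖ ^ 3) * t := by
          have : line t - line 0 = t • v := by simp [hline]
          rw [this, norm_smul, Real.norm_eq_abs, abs_of_nonneg ht.1]; ring
  have key := taylor1d g g' g'' hd1 hd2 h0 (L₂ * ‖v‖ ^ 3) hb
  have e1 : g 1 = Q (u_ref + v) := by simp [hg, hline]
  have e0 : g 0 = Q u_ref := by simp [hg, hline]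
  have e2 : g'' 0 = H u_ref v v := by simp [hg'', hline]
  rw [e1, e0, e2] at key
  linarith [key, abs_nonneg (Q (u_ref + v) - Q u_ref - H u_ref v v / 2)]


set_option maxHeartbeats 1000000

/-- Theorem 2, bound form: Under A1–A2, with `δ` the weighted
projection distance of `u_W`, `‖u_I − u_ref‖_W = β·δ` for some `β > 1`, and
`c = (β² − 1)/2`, the value advantage of the Hessian-weighted projection over
any competing feasible action `u_I` satisfies
`Q(u_W) − Q(u_I) ≥ c·δ² − L₂D³/(3μ³)`. -/
theorem weighted_vs_euclidean_value_gap
    (m : ℕ)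
    (Q : EuclideanSpace ℝ (Fin m) → ℝ)
    (hQ : ContDiff ℝ 2 Q)
    (u_ref : EuclideanSpace ℝ (Fin m))
    (H : EuclideanSpace ℝ (Fin m) →
      EuclideanSpace ℝ (Fin m) →L[ℝ] EuclideanSpace ℝ (Fin m) →L[ℝ] ℝ)
    (hH : ∀ u, H u = fderiv ℝ (fderiv ℝ Q) u)
    (L₂ : ℝ) (hL₂ : 0 < L₂)
    (hLip : ∀ u v, ‖H u - H v‖ ≤ L₂ * ‖u - v‖)
    (hgrad : fderiv ℝ Q u_ref = 0)
    (W : EuclideanSpace ℝ (Fin m) →L[ℝ] EuclideanSpace ℝ (Fin m) →L[ℝ] ℝ)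
    (hW : W = -H u_ref)
    (D : ℝ) (hD : 0 < D)
    (S : Set (EuclideanSpace ℝ (Fin m)))
    (hS : S = {u | W (u - u_ref) (u - u_ref) ≤ D ^ 2})
    (μ : ℝ) (hμ : 0 < μ)
    (hcurv : ∀ u ∈ S, ∀ v : EuclideanSpace ℝ (Fin m),
      H u v v ≤ -μ ^ 2 * ‖v‖ ^ 2)
    (𝒰 : Set (EuclideanSpace ℝ (Fin m)))
    (uW uI : EuclideanSpace ℝ (Fin m))
    (huW𝒰 : uW ∈ 𝒰) (huI𝒰 : uI ∈ 𝒰)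
    (huWmin : ∀ u ∈ 𝒰, W (uW - u_ref) (uW - u_ref) ≤ W (u - u_ref) (u - u_ref))
    (huWS : uW ∈ S) (huIS : uI ∈ S)
    (δ : ℝ) (hδ : δ = Real.sqrt (W (uW - u_ref) (uW - u_ref)))
    (hδpos : 0 < δ)
    (β : ℝ) (hβ : 1 < β)
    (hβδ : Real.sqrt (W (uI - u_ref) (uI - u_ref)) = β * δ)
    (c : ℝ) (hc : c = (β ^ 2 - 1) / 2) :
    Q uW - Q uI ≥ c * δ ^ 2 - L₂ * D ^ 3 / (3 * μ ^ 3) := by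
  set vW := uW - u_ref with hvW
  set vI := uI - u_ref with hvI
  -- u_ref ∈ S
  have hrefS : u_ref ∈ S := by
    rw [hS]; simp; positivity
  -- W v v ≥ μ² ‖v‖²
  have hWpos : ∀ v : EuclideanSpace ℝ (Fin m), μ ^ 2 * ‖v‖ ^ 2 ≤ W v v := by
    intro v
    have := hcurv u_ref hrefS v
    rw [hW]; simp; linarith
  have hAW : W vW vW ≤ D ^ 2 := by rw [hS] at huWS; exact huWS
  have hAI : W vI vI ≤ D ^ 2 := by rw [hS] at huIS; exact huIS
  -- δ² = W vW vW
  have hδ2 : δ ^ 2 = W vW vW := by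
    rw [hδ, Real.sq_sqrt]
    exact le_trans (by positivity) (hWpos vW)
  have hβδ2 : W vI vI = β ^ 2 * δ ^ 2 := by
    have h := hβδ
    have hnn : (0:ℝ) ≤ W vI vI := le_trans (by positivity) (hWpos vI)
    have := Real.sq_sqrt hnn
    rw [h] at this
    rw [← this]; ring
  -- norm bounds
  have hnormW : ‖vW‖ ^ 3 ≤ D ^ 3 / μ ^ 3 := by
    have h1 : μ ^ 2 * ‖vW‖ ^ 2 ≤ D ^ 2 := le_trans (hWpos vW) hAW
    have h2 : ‖vW‖ ≤ D / μ := by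
      rw [le_div_iff₀ hμ]
      have : (‖vW‖ * μ) ^ 2 ≤ D ^ 2 := by nlinarith
      exact (pow_le_pow_iff_left₀ (by positivity) hD.le (by norm_num)).mp this
    calc ‖vW‖ ^ 3 ≤ (D / μ) ^ 3 := pow_le_pow_left₀ (norm_nonneg vW) h2 3
      _ = D ^ 3 / μ ^ 3 := by ring
  have hnormI : ‖vI‖ ^ 3 ≤ D ^ 3 / μ ^ 3 := by
    have h1 : μ ^ 2 * ‖vI‖ ^ 2 ≤ D ^ 2 := le_trans (hWpos vI) hAI
    have h2 : ‖vI‖ ≤ D / μ := by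
      rw [le_div_iff₀ hμ]
      have : (‖vI‖ * μ) ^ 2 ≤ D ^ 2 := by nlinarith
      exact (pow_le_pow_iff_left₀ (by positivity) hD.le (by norm_num)).mp this
    calc ‖vI‖ ^ 3 ≤ (D / μ) ^ 3 := pow_le_pow_left₀ (norm_nonneg vI) h2 3
      _ = D ^ 3 / μ ^ 3 := by ring
  -- Taylor bounds
  have htW := taylorE Q hQ H hH L₂ hLip u_ref hgrad vW
  have htI := taylorE Q hQ H hH L₂ hLip u_ref hgrad vI
  rw [show u_ref + vW = uW by rw [hvW]; abel] at htW
  rw [show u_ref + vI = uI by rw [hvI]; abel] at htI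
  have hHW : H u_ref vW vW = -(W vW vW) := by rw [hW]; simp
  have hHI : H u_ref vI vI = -(W vI vI) := by rw [hW]; simp
  rw [hHW] at htW; rw [hHI] at htI
  have habsW := abs_le.mp htW
  have habsI := abs_le.mp htI
  have hbW : L₂ * ‖vW‖ ^ 3 / 6 ≤ L₂ * (D ^ 3 / μ ^ 3) / 6 := by
    apply div_le_div_of_nonneg_right _ (by norm_num)
    exact mul_le_mul_of_nonneg_left hnormW hL₂.le
  have hbI : L₂ * ‖vI‖ ^ 3 / 6 ≤ L₂ * (D ^ 3 / μ ^ 3) / 6 := by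
    apply div_le_div_of_nonneg_right _ (by norm_num)
    exact mul_le_mul_of_nonneg_left hnormI hL₂.le
  have hμ3 : (0:ℝ) < μ ^ 3 := by positivity
  rw [hc]
  have : L₂ * D ^ 3 / (3 * μ ^ 3) = 2 * (L₂ * (D ^ 3 / μ ^ 3) / 6) := by
    field_simp; ring
  rw [this]
  have hgoal : (β ^ 2 - 1) / 2 * δ ^ 2 = (W vI vI - W vW vW) / 2 := by
    rw [hβδ2, ← hδ2]; ring
  rw [hgoal]
  linarith [habsW.1, habsW.2, habsI.1, habsI.2, hbW, hbI]
end

section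
/- Let E = EuclideanSpace ℝ (Fin m) and let Q : E → ℝ be twice continuously differentiable with Hessian H(u) := ∇²Q(u). Assume ‖H(u) − H(v)‖ ≤ L₂·‖u − v‖ for all u, v (L₂ > 0), ∇Q(u_ref) = 0, W := −H(u_ref), 𝒮 := {u : W(u − u_ref, u − u_ref) ≤ D²} with D > 0, and H(u)(v,v) ≤ −μ²·‖v‖² for all u ∈ 𝒮 and all v (μ > 0). Let 𝒰 ⊆ E, let u_W ∈ 𝒰 minimize u ↦ W(u − u_ref, u − u_ref) over 𝒰, let u_I ∈ 𝒰, and assume u_W, u_I ∈ 𝒮. Write δ := ‖u_W − u_ref‖_W with δ > 0, suppose ‖u_I − u_ref‖_W = β·δ for some β > 1, and set c := (β² − 1)/2. If μ³/L₂ ≥ D³/(3·c·δ²), then Q(u_W) ≥ Q(u_I). -/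
lemma taylor2 {E : Type*} [NormedAddCommGroup E] [NormedSpace ℝ E]
    (Q : E → ℝ) (hQ : ContDiff ℝ 2 Q) (L₂ : ℝ) (hL₂ : 0 ≤ L₂)
    (hL : ∀ u v, ‖fderiv ℝ (fderiv ℝ Q) u - fderiv ℝ (fderiv ℝ Q) v‖ ≤ L₂ * ‖u - v‖)
    (x d : E) (hgrad : fderiv ℝ Q x = 0) :
    |Q (x + d) - Q x - (1/2) * (fderiv ℝ (fderiv ℝ Q) x d d)| ≤ L₂/6 * ‖d‖^3 := by
  set l : ℝ → E := fun t => x + t • d with hl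
  have hline : ∀ t : ℝ, HasDerivAt l d t := by
    intro t
    have h1 : HasDerivAt (fun t : ℝ => t • d) ((1:ℝ) • d) t :=
      (hasDerivAt_id t).smul_const d
    simpa [hl] using h1.const_add x
  have hlcont : Continuous l := by
    fun_prop
  have hdiffQ : Differentiable ℝ Q := hQ.differentiable (by norm_num)
  have hC1 : ContDiff ℝ 1 (fderiv ℝ Q) := hQ.fderiv_right (by norm_num)
  set g1 : ℝ → ℝ := fun t => fderiv ℝ Q (l t) d with hg1def
  set g2 : ℝ → ℝ := fun t => fderiv ℝ (fderiv ℝ Q) (l t) d d with hg2def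
  have hg : ∀ t : ℝ, HasDerivAt (fun s => Q (l s)) (g1 t) t := fun t =>
    (hdiffQ (l t)).hasFDerivAt.comp_hasDerivAt t (hline t)
  have hg1 : ∀ t : ℝ, HasDerivAt g1 (g2 t) t := by
    intro t
    have hc : HasDerivAt (fun s => fderiv ℝ Q (l s))
        (fderiv ℝ (fderiv ℝ Q) (l t) d) t :=
      ((hC1.differentiable one_ne_zero) (l t)).hasFDerivAt.comp_hasDerivAt t (hline t)
    have := hc.clm_apply (hasDerivAt_const t d)
    simpa using this
  have hg1cont : Continuous g1 :=
    ((hQ.continuous_fderiv (by norm_num)).comp hlcont).clm_apply continuous_const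
  have hg2cont : Continuous g2 :=
    (((hC1.continuous_fderiv one_ne_zero).comp hlcont).clm_apply continuous_const).clm_apply
      continuous_const
  have hg10 : g1 0 = 0 := by simp [hg1def, hl, hgrad]
  have hg20 : g2 0 = fderiv ℝ (fderiv ℝ Q) x d d := by simp [hg2def, hl]
  have hg2bound : ∀ s : ℝ, |g2 s - g2 0| ≤ L₂ * ‖d‖^3 * |s| := by
    intro s
    have h1 : g2 s - g2 0 =
        ((fderiv ℝ (fderiv ℝ Q) (l s) - fderiv ℝ (fderiv ℝ Q) (l 0)) d) d := by
      simp [hg2def, ContinuousLinearMap.sub_apply]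
    rw [h1]
    have h2 := (fderiv ℝ (fderiv ℝ Q) (l s) - fderiv ℝ (fderiv ℝ Q) (l 0)).le_opNorm₂ d d
    have h3 := hL (l s) (l 0)
    have h4 : ‖l s - l 0‖ = |s| * ‖d‖ := by
      simp [hl, norm_smul]
    calc |((fderiv ℝ (fderiv ℝ Q) (l s) - fderiv ℝ (fderiv ℝ Q) (l 0)) d) d|
        ≤ ‖fderiv ℝ (fderiv ℝ Q) (l s) - fderiv ℝ (fderiv ℝ Q) (l 0)‖ * ‖d‖ * ‖d‖ := h2
      _ ≤ (L₂ * (|s| * ‖d‖)) * ‖d‖ * ‖d‖ := by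
          rw [h4] at h3
          have hd2 : (0:ℝ) ≤ ‖d‖ * ‖d‖ := by positivity
          nlinarith [norm_nonneg d]
      _ = L₂ * ‖d‖^3 * |s| := by ring
  -- Step A
  have stepA : ∀ t ∈ Set.Icc (0:ℝ) 1, |g1 t - t * g2 0| ≤ L₂ * ‖d‖^3 * t^2 / 2 := by
    intro t ht
    have heq : g1 t - t * g2 0 = ∫ s in (0:ℝ)..t, (g2 s - g2 0) := by
      have hderiv : ∀ s ∈ Set.uIcc (0:ℝ) t,
          HasDerivAt (fun s => g1 s - s * g2 0) (g2 s - g2 0) s := fun s _ =>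
        (hg1 s).sub (hasDerivAt_mul_const (g2 0))
      have hint : IntervalIntegrable (fun s => g2 s - g2 0) MeasureTheory.volume 0 t :=
        (hg2cont.sub continuous_const).intervalIntegrable _ _
      have := intervalIntegral.integral_eq_sub_of_hasDerivAt hderiv hint
      rw [this]
      simp [hg10]
    rw [heq]
    have hb : ∀ᵐ s ∂MeasureTheory.volume.restrict (Set.uIoc (0:ℝ) t),
        ‖g2 s - g2 0‖ ≤ L₂ * ‖d‖^3 * s := by
      filter_upwards [MeasureTheory.ae_restrict_mem measurableSet_uIoc] with s hs
      rw [Set.uIoc_of_le ht.1] at hs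
      have : |s| = s := abs_of_pos hs.1
      calc ‖g2 s - g2 0‖ ≤ L₂ * ‖d‖^3 * |s| := hg2bound s
        _ = L₂ * ‖d‖^3 * s := by rw [this]
    have hbi : IntervalIntegrable (fun s => L₂ * ‖d‖^3 * s) MeasureTheory.volume 0 t :=
      (continuous_const.mul continuous_id).intervalIntegrable _ _
    have := intervalIntegral.norm_integral_le_abs_of_norm_le hb hbi
    calc |∫ s in (0:ℝ)..t, (g2 s - g2 0)| ≤ |∫ s in (0:ℝ)..t, L₂ * ‖d‖^3 * s| := this
      _ = L₂ * ‖d‖^3 * t^2 / 2 := by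
          rw [intervalIntegral.integral_const_mul, integral_id]
          have ht0 : (0:ℝ) ≤ t := ht.1
          rw [show ((t:ℝ)^2 - 0^2)/2 = t^2/2 by ring, abs_of_nonneg (by positivity)]
          ring
  -- Step B
  have hQeq : Q (x + d) - Q x - (1/2) * (fderiv ℝ (fderiv ℝ Q) x d d)
      = ∫ t in (0:ℝ)..1, (g1 t - t * g2 0) := by
    have h1 : (∫ t in (0:ℝ)..1, g1 t) = Q (x + d) - Q x := by
      have := intervalIntegral.integral_eq_sub_of_hasDerivAt
        (f := fun s => Q (l s)) (fun t _ => hg t) (hg1cont.intervalIntegrable 0 1)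
      rw [this]; simp [hl]
    have h2 : (∫ t in (0:ℝ)..1, t * g2 0) = (1/2) * g2 0 := by
      rw [intervalIntegral.integral_mul_const, integral_id]
      ring
    rw [intervalIntegral.integral_sub (hg1cont.intervalIntegrable 0 1)
      ((by fun_prop : Continuous fun t : ℝ => t * g2 0).intervalIntegrable 0 1), h1, h2, hg20]
  rw [hQeq]
  have hb : ∀ᵐ t ∂MeasureTheory.volume.restrict (Set.uIoc (0:ℝ) 1),
      ‖g1 t - t * g2 0‖ ≤ L₂ * ‖d‖^3 * t^2 / 2 := by
    filter_upwards [MeasureTheory.ae_restrict_mem measurableSet_uIoc] with t ht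
    rw [Set.uIoc_of_le zero_le_one] at ht
    exact stepA t ⟨le_of_lt ht.1, ht.2⟩
  have hbi : IntervalIntegrable (fun t => L₂ * ‖d‖^3 * t^2 / 2) MeasureTheory.volume 0 1 :=
    (by fun_prop : Continuous fun t : ℝ => L₂ * ‖d‖^3 * t^2 / 2).intervalIntegrable _ _
  have := intervalIntegral.norm_integral_le_abs_of_norm_le hb hbi
  calc |∫ t in (0:ℝ)..1, (g1 t - t * g2 0)| ≤ |∫ t in (0:ℝ)..1, L₂ * ‖d‖^3 * t^2 / 2| := this
    _ = L₂/6 * ‖d‖^3 := by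
        have : (∫ t in (0:ℝ)..1, L₂ * ‖d‖^3 * t^2 / 2)
            = (L₂ * ‖d‖^3 / 2) * ∫ t in (0:ℝ)..1, t^2 := by
          rw [← intervalIntegral.integral_const_mul]
          congr 1; ext t; ring
        rw [this, integral_pow]
        rw [abs_of_nonneg (by positivity)]
        norm_num
        ring
lemma aux_norm {a n D μ : ℝ} (hD : 0 < D) (hμ : 0 < μ) (hn : 0 ≤ n)
    (h1 : a ≤ D ^ 2) (h2 : μ ^ 2 * n ^ 2 ≤ a) : n ≤ D / μ := by
  rw [le_div_iff₀ hμ]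
  nlinarith

lemma aux_cond {L₂ D μ c δ : ℝ} (hL₂ : 0 < L₂) (hD : 0 < D) (hμ : 0 < μ)
    (hc : 0 < c) (hδ : 0 < δ) (hcond : D ^ 3 / (3 * c * δ ^ 2) ≤ μ ^ 3 / L₂) :
    L₂ / 3 * (D ^ 3 / μ ^ 3) ≤ c * δ ^ 2 := by
  rw [div_le_div_iff₀ (mul_pos (mul_pos (by norm_num) hc) (pow_pos hδ 2)) hL₂] at hcond
  rw [show L₂/3*(D^3/μ^3) = (L₂*D^3)/(3*μ^3) by field_simp]
  rw [div_le_iff₀ (by positivity)]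
  nlinarith

lemma aux_main {qW qI q0 L₂ D μ c δ β AW AI : ℝ}
    (hL₂ : 0 < L₂) (hD : 0 < D) (hμ : 0 < μ) (hδ : 0 < δ) (hβ : 1 < β)
    (hc : c = (β ^ 2 - 1) / 2)
    (hTW : |qW - q0 - 1/2 * -(δ ^ 2)| ≤ L₂/6 * AW)
    (hTI : |qI - q0 - 1/2 * -(β ^ 2 * δ ^ 2)| ≤ L₂/6 * AI)
    (hAW : AW ≤ (D/μ) ^ 3) (hAI : AI ≤ (D/μ) ^ 3)
    (hcond : D ^ 3 / (3 * c * δ ^ 2) ≤ μ ^ 3 / L₂) : qI ≤ qW := by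
  have hcpos : 0 < c := by rw [hc]; nlinarith
  have hlast := aux_cond hL₂ hD hμ hcpos hδ hcond
  have h1 := abs_le.mp hTW
  have h2 := abs_le.mp hTI
  have hK : (D/μ) ^ 3 = D ^ 3 / μ ^ 3 := div_pow D μ 3
  rw [hK] at hAW hAI
  have e1 := mul_le_mul_of_nonneg_left hAW (by positivity : (0:ℝ) ≤ L₂/6)
  have e2 := mul_le_mul_of_nonneg_left hAI (by positivity : (0:ℝ) ≤ L₂/6)
  rw [hc] at hlast
  linarith [h1.1, h1.2, h2.1, h2.2]

/-- Theorem 2, sufficient condition: Under A1–A2, with `δ` the weighted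
projection distance of `u_W`, `‖u_I − u_ref‖_W = β·δ` for some `β > 1`, and
`c = (β² − 1)/2`, if `μ³/L₂ ≥ D³/(3cδ²)` then the Hessian-weighted projection is no worse
than the competing feasible action `u_I`: `Q(u_W) ≥ Q(u_I)`. -/
theorem weighted_beats_euclidean_condition
    (m : ℕ)
    (Q : EuclideanSpace ℝ (Fin m) → ℝ)
    (hQ : ContDiff ℝ 2 Q)
    (u_ref : EuclideanSpace ℝ (Fin m))
    (H : EuclideanSpace ℝ (Fin m) →
      EuclideanSpace ℝ (Fin m) →L[ℝ] EuclideanSpace ℝ (Fin m) →L[ℝ] ℝ)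
    (hH : ∀ u, H u = fderiv ℝ (fderiv ℝ Q) u)
    (L₂ : ℝ) (hL₂ : 0 < L₂)
    (hLip : ∀ u v, ‖H u - H v‖ ≤ L₂ * ‖u - v‖)
    (hgrad : fderiv ℝ Q u_ref = 0)
    (W : EuclideanSpace ℝ (Fin m) →L[ℝ] EuclideanSpace ℝ (Fin m) →L[ℝ] ℝ)
    (hW : W = -H u_ref)
    (D : ℝ) (hD : 0 < D)
    (S : Set (EuclideanSpace ℝ (Fin m)))
    (hS : S = {u | W (u - u_ref) (u - u_ref) ≤ D ^ 2})
    (μ : ℝ) (hμ : 0 < μ)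
    (hcurv : ∀ u ∈ S, ∀ v : EuclideanSpace ℝ (Fin m),
      H u v v ≤ -μ ^ 2 * ‖v‖ ^ 2)
    (𝒰 : Set (EuclideanSpace ℝ (Fin m)))
    (uW uI : EuclideanSpace ℝ (Fin m))
    (huW𝒰 : uW ∈ 𝒰) (huI𝒰 : uI ∈ 𝒰)
    (huWmin : ∀ u ∈ 𝒰, W (uW - u_ref) (uW - u_ref) ≤ W (u - u_ref) (u - u_ref))
    (huWS : uW ∈ S) (huIS : uI ∈ S)
    (δ : ℝ) (hδ : δ = Real.sqrt (W (uW - u_ref) (uW - u_ref)))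
    (hδpos : 0 < δ)
    (β : ℝ) (hβ : 1 < β)
    (hβδ : Real.sqrt (W (uI - u_ref) (uI - u_ref)) = β * δ)
    (c : ℝ) (hc : c = (β ^ 2 - 1) / 2)
    (hcond : μ ^ 3 / L₂ ≥ D ^ 3 / (3 * c * δ ^ 2)) :
    Q uW ≥ Q uI := by
  obtain ⟨dW, hdW⟩ : ∃ d, uW - u_ref = d := ⟨_, rfl⟩
  obtain ⟨dI, hdI⟩ : ∃ d, uI - u_ref = d := ⟨_, rfl⟩
  rw [hS] at huWS huIS
  simp only [Set.mem_setOf_eq] at huWS huIS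
  rw [hdW] at hδ huWS
  rw [hdI] at hβδ huIS
  have hLip' : ∀ u v, ‖fderiv ℝ (fderiv ℝ Q) u - fderiv ℝ (fderiv ℝ Q) v‖ ≤ L₂ * ‖u - v‖ := by
    intro u v; have := hLip u v; rwa [hH u, hH v] at this
  -- Taylor bounds
  have hTW := taylor2 Q hQ L₂ hL₂.le hLip' u_ref dW hgrad
  have hTI := taylor2 Q hQ L₂ hL₂.le hLip' u_ref dI hgrad
  rw [show u_ref + dW = uW by rw [← hdW]; abel] at hTW
  rw [show u_ref + dI = uI by rw [← hdI]; abel] at hTI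
  -- rewrite Hessian in terms of W
  have hHW : ∀ v : EuclideanSpace ℝ (Fin m), fderiv ℝ (fderiv ℝ Q) u_ref v v = -(W v v) := by
    intro v
    rw [← hH u_ref, hW]
    simp
  rw [hHW dW] at hTW
  rw [hHW dI] at hTI
  -- u_ref ∈ S and coercivity of W
  have hrefS : u_ref ∈ S := by rw [hS]; simp; positivity
  have hWpos : ∀ v : EuclideanSpace ℝ (Fin m), μ ^ 2 * ‖v‖ ^ 2 ≤ W v v := by
    intro v
    have h := hcurv u_ref hrefS v
    have he : H u_ref v v = -(W v v) := by rw [hW]; simp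
    rw [he] at h
    linarith
  -- weighted norms
  have hWdW : (0:ℝ) ≤ W dW dW := le_trans (by positivity) (hWpos dW)
  have hWdI : (0:ℝ) ≤ W dI dI := le_trans (by positivity) (hWpos dI)
  have hδ2 : W dW dW = δ ^ 2 := by
    rw [hδ, Real.sq_sqrt hWdW]
  have hβ2 : W dI dI = β ^ 2 * δ ^ 2 := by
    have h := Real.sq_sqrt hWdI
    rw [hβδ] at h
    rw [← h]; ring
  -- norm bounds from membership in S
  have hnormW : ‖dW‖ ≤ D / μ := aux_norm hD hμ (norm_nonneg _) huWS (hWpos dW)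
  have hnormI : ‖dI‖ ≤ D / μ := aux_norm hD hμ (norm_nonneg _) huIS (hWpos dI)
  have hcubeW : ‖dW‖ ^ 3 ≤ (D/μ) ^ 3 := pow_le_pow_left₀ (norm_nonneg _) hnormW 3
  have hcubeI : ‖dI‖ ^ 3 ≤ (D/μ) ^ 3 := pow_le_pow_left₀ (norm_nonneg _) hnormI 3
  rw [hδ2] at hTW
  rw [hβ2] at hTI
  exact aux_main hL₂ hD hμ hδpos hβ hc hTW hTI hcubeW hcubeI (ge_iff_le.mp hcond)
end

section
/- Let E = EuclideanSpace ℝ (Fin m), let u_ref ∈ E, and let W, Ŵ : E → E be symmetric positive semidefinite linear maps with ⟪v, W v⟫ ≥ μ²·‖v‖² for all v (μ > 0) and ‖Ŵ − W‖ ≤ ρ in operator norm, where 0 ≤ ρ < μ². Define φ(u) := (1/2)·⟪u − u_ref, W(u − u_ref)⟫ and φ̂(u) := (1/2)·⟪u − u_ref, Ŵ(u − u_ref)⟫, let 𝒰 ⊆ E be a convex set, let u_W ∈ 𝒰 minimize φ over 𝒰 and û_W ∈ 𝒰 minimize φ̂ over 𝒰, and assume both u_W and û_W lie in 𝒮 :=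 {u : ⟪u − u_ref, W(u − u_ref)⟫ ≤ D²} for some D > 0. Then ‖û_W − u_W‖ ≤ √(2ρ)·D/μ². -/
open scoped RealInnerProductSpace

lemma quad_min_varineq {m : ℕ} (u_ref : EuclideanSpace ℝ (Fin m))
    (A : EuclideanSpace ℝ (Fin m) →L[ℝ] EuclideanSpace ℝ (Fin m))
    (hsym : ∀ v w : EuclideanSpace ℝ (Fin m), ⟪A v, w⟫ = ⟪v, A w⟫)
    (hpsd : ∀ v : EuclideanSpace ℝ (Fin m), 0 ≤ ⟪v, A v⟫)
    (𝒰 : Set (EuclideanSpace ℝ (Fin m))) (h𝒰 : Convex ℝ 𝒰)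
    (a b : EuclideanSpace ℝ (Fin m)) (ha : a ∈ 𝒰) (hb : b ∈ 𝒰)
    (hmin : ∀ u ∈ 𝒰, ⟪a - u_ref, A (a - u_ref)⟫ ≤ ⟪u - u_ref, A (u - u_ref)⟫) :
    0 ≤ ⟪a - u_ref, A (b - a)⟫ := by
  set x := a - u_ref with hx
  set d := b - a with hd
  set g := ⟪x, A d⟫ with hg
  set q := ⟪d, A d⟫ with hqdef
  have hq : 0 ≤ q := hpsd d
  have key : ∀ t : ℝ, 0 < t → t ≤ 1 → 0 ≤ 2*t*g + t^2*q := by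
    intro t ht0 ht1
    have hmem : a + t • d ∈ 𝒰 := by
      have := h𝒰 ha hb (by linarith : (0:ℝ) ≤ 1 - t) ht0.le (by ring)
      convert this using 1
      rw [hd]; module
    have h := hmin _ hmem
    have heq : a + t • d - u_ref = x + t • d := by rw [hx]; abel
    rw [heq] at h
    have hsym' : ⟪d, A x⟫ = ⟪x, A d⟫ := by
      rw [← hsym d x, real_inner_comm]
    have expand : ⟪x + t • d, A (x + t • d)⟫ = ⟪x, A x⟫ + 2*t*g + t^2*q := by
      simp only [map_add, map_smul, inner_add_left, inner_add_right,
        real_inner_smul_left, real_inner_smul_right, hg, hqdef]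
      rw [hsym']
      ring
    rw [expand] at h
    linarith
  by_contra hgneg
  push_neg at hgneg
  rcases eq_or_lt_of_le hq with hq0 | hqpos
  · have := key 1 one_pos le_rfl
    nlinarith
  · have ht0 : 0 < min 1 (-g/q) := lt_min one_pos (div_pos (neg_pos.2 hgneg) hqpos)
    have h := key _ ht0 (min_le_left _ _)
    have htq : min 1 (-g/q) ≤ -g/q := min_le_right _ _
    have h2 : min 1 (-g/q) * q ≤ -g := by
      have := mul_le_mul_of_nonneg_right htq hqpos.le
      rwa [div_mul_cancel₀ _ hqpos.ne'] at this
    nlinarith [mul_le_mul_of_nonneg_left h2 ht0.le, mul_pos ht0 (neg_pos.2 hgneg)]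

lemma quad_min_gap {m : ℕ} (u_ref : EuclideanSpace ℝ (Fin m))
    (A : EuclideanSpace ℝ (Fin m) →L[ℝ] EuclideanSpace ℝ (Fin m))
    (hsym : ∀ v w : EuclideanSpace ℝ (Fin m), ⟪A v, w⟫ = ⟪v, A w⟫)
    (hpsd : ∀ v : EuclideanSpace ℝ (Fin m), 0 ≤ ⟪v, A v⟫)
    (𝒰 : Set (EuclideanSpace ℝ (Fin m))) (h𝒰 : Convex ℝ 𝒰)
    (a b : EuclideanSpace ℝ (Fin m)) (ha : a ∈ 𝒰) (hb : b ∈ 𝒰)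
    (hmin : ∀ u ∈ 𝒰, ⟪a - u_ref, A (a - u_ref)⟫ ≤ ⟪u - u_ref, A (u - u_ref)⟫) :
    ⟪a - u_ref, A (a - u_ref)⟫ + ⟪b - a, A (b - a)⟫ ≤ ⟪b - u_ref, A (b - u_ref)⟫ := by
  have hvar := quad_min_varineq u_ref A hsym hpsd 𝒰 h𝒰 a b ha hb hmin
  set x := a - u_ref with hx
  set d := b - a with hd
  have heq : b - u_ref = x + d := by rw [hx, hd]; abel
  rw [heq]
  have hsym' : ⟪d, A x⟫ = ⟪x, A d⟫ := by rw [← hsym d x, real_inner_comm]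
  have expand : ⟪x + d, A (x + d)⟫ = ⟪x, A x⟫ + 2*⟪x, A d⟫ + ⟪d, A d⟫ := by
    simp only [map_add, inner_add_left, inner_add_right]
    rw [hsym']; ring
  rw [expand]
  linarith

set_option maxHeartbeats 1000000 in
/-- Training-error bound on the learned weighted projection.
If `W, Ŵ` are symmetric positive semidefinite with `W ⪰ μ²·I` and
`‖Ŵ − W‖ ≤ ρ < μ²`, and `u_W`, `û_W` minimize the respective weighted
half-squared-distance objectives over a convex set `𝒰` and lie in the weighted
ball `𝒮` of radius `D`, then `‖û_W − u_W‖ ≤ √(2ρ)·D/μ²`. -/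
theorem learned_projection_gap_bound
    (m : ℕ) (u_ref : EuclideanSpace ℝ (Fin m))
    (W Wh : EuclideanSpace ℝ (Fin m) →L[ℝ] EuclideanSpace ℝ (Fin m))
    (hWsym : ∀ v w : EuclideanSpace ℝ (Fin m), ⟪W v, w⟫ = ⟪v, W w⟫)
    (hWhsym : ∀ v w : EuclideanSpace ℝ (Fin m), ⟪Wh v, w⟫ = ⟪v, Wh w⟫)
    (hWpsd : ∀ v : EuclideanSpace ℝ (Fin m), 0 ≤ ⟪v, W v⟫)
    (hWhpsd : ∀ v : EuclideanSpace ℝ (Fin m), 0 ≤ ⟪v, Wh v⟫)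
    (μ : ℝ) (hμ : 0 < μ)
    (hWlb : ∀ v : EuclideanSpace ℝ (Fin m), μ ^ 2 * ‖v‖ ^ 2 ≤ ⟪v, W v⟫)
    (ρ : ℝ) (hρ0 : 0 ≤ ρ) (hρμ : ρ < μ ^ 2)
    (herr : ‖Wh - W‖ ≤ ρ)
    (φ φh : EuclideanSpace ℝ (Fin m) → ℝ)
    (hφ : ∀ u, φ u = (1 / 2) * ⟪u - u_ref, W (u - u_ref)⟫)
    (hφh : ∀ u, φh u = (1 / 2) * ⟪u - u_ref, Wh (u - u_ref)⟫)
    (𝒰 : Set (EuclideanSpace ℝ (Fin m))) (h𝒰 : Convex ℝ 𝒰)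
    (uW uhW : EuclideanSpace ℝ (Fin m))
    (huW : uW ∈ 𝒰) (huhW : uhW ∈ 𝒰)
    (huWmin : ∀ u ∈ 𝒰, φ uW ≤ φ u)
    (huhWmin : ∀ u ∈ 𝒰, φh uhW ≤ φh u)
    (D : ℝ) (hD : 0 < D)
    (S : Set (EuclideanSpace ℝ (Fin m)))
    (hS : S = {u | ⟪u - u_ref, W (u - u_ref)⟫ ≤ D ^ 2})
    (huWS : uW ∈ S) (huhWS : uhW ∈ S) :
    ‖uhW - uW‖ ≤ Real.sqrt (2 * ρ) * D / μ ^ 2 := by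
  -- strong-convexity gap inequalities for both objectives
  have h1 := quad_min_gap u_ref W hWsym hWpsd 𝒰 h𝒰 uW uhW huW huhW (by
    intro u hu
    have := huWmin u hu
    rw [hφ, hφ] at this
    linarith)
  have h2 := quad_min_gap u_ref Wh hWhsym hWhpsd 𝒰 h𝒰 uhW uW huhW huW (by
    intro u hu
    have := huhWmin u hu
    rw [hφh, hφh] at this
    linarith)
  set f : EuclideanSpace ℝ (Fin m) := uW - u_ref with hf
  set f' : EuclideanSpace ℝ (Fin m) := uhW - u_ref with hf'
  set d : EuclideanSpace ℝ (Fin m) := uhW - uW with hdv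
  have hd' : uW - uhW = -d := by rw [hdv]; abel
  rw [hd'] at h2
  have hWhd : ⟪(-d : EuclideanSpace ℝ (Fin m)), Wh (-d)⟫ = ⟪d, Wh d⟫ := by
    simp [inner_neg_neg]
  rw [hWhd] at h2
  -- operator norm bound
  have hbnd : ∀ v : EuclideanSpace ℝ (Fin m), |⟪v, Wh v⟫ - ⟪v, W v⟫| ≤ ρ * ‖v‖ ^ 2 := by
    intro v
    have h0 : ⟪v, Wh v⟫ - ⟪v, W v⟫ = ⟪v, (Wh - W) v⟫ := by
      simp [ContinuousLinearMap.sub_apply, inner_sub_right]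
    rw [h0]
    calc |⟪v, (Wh - W) v⟫| ≤ ‖v‖ * ‖(Wh - W) v‖ := abs_real_inner_le_norm _ _
      _ ≤ ‖v‖ * (‖Wh - W‖ * ‖v‖) := by
          gcongr
          exact (Wh - W).le_opNorm v
      _ ≤ ρ * ‖v‖ ^ 2 := by nlinarith [norm_nonneg v, norm_nonneg (Wh - W)]
  have hbf := abs_le.mp (hbnd f)
  have hbf' := abs_le.mp (hbnd f')
  -- weighted ball bounds
  rw [hS] at huWS huhWS
  have hfS : ⟪f, W f⟫ ≤ D ^ 2 := huWS
  have hf'S : ⟪f', W f'⟫ ≤ D ^ 2 := huhWS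
  have hflb := hWlb f
  have hf'lb := hWlb f'
  have hdlb := hWlb d
  have hWhdnn : 0 ≤ ⟪d, Wh d⟫ := hWhpsd d
  have hμ2 : (0:ℝ) < μ ^ 2 := by positivity
  -- combine: μ² ‖d‖² ≤ ⟪d, W d⟫ ≤ ρ‖f‖² + ρ‖f'‖² ≤ 2ρD²/μ²
  have hfn : μ ^ 2 * ‖f‖ ^ 2 ≤ D ^ 2 := le_trans hflb hfS
  have hf'n : μ ^ 2 * ‖f'‖ ^ 2 ≤ D ^ 2 := le_trans hf'lb hf'S
  have hQ : μ ^ 2 * (μ ^ 2 * ‖d‖ ^ 2) ≤ 2 * ρ * D ^ 2 := by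
    have hQ1 : ⟪d, W d⟫ ≤ ρ * ‖f‖ ^ 2 + ρ * ‖f'‖ ^ 2 := by linarith
    have a1 := mul_le_mul_of_nonneg_left hdlb hμ2.le
    have a2 := mul_le_mul_of_nonneg_left hQ1 hμ2.le
    have a3 := mul_le_mul_of_nonneg_left hfn hρ0
    have a4 := mul_le_mul_of_nonneg_left hf'n hρ0
    have e : μ ^ 2 * (ρ * ‖f‖ ^ 2 + ρ * ‖f'‖ ^ 2)
        = ρ * (μ ^ 2 * ‖f‖ ^ 2) + ρ * (μ ^ 2 * ‖f'‖ ^ 2) := by ring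
    linarith
  have hdsq : ‖d‖ ^ 2 ≤ 2 * ρ * D ^ 2 / (μ ^ 2) ^ 2 := by
    rw [le_div_iff₀ (by positivity)]
    have e : ‖d‖ ^ 2 * (μ ^ 2) ^ 2 = μ ^ 2 * (μ ^ 2 * ‖d‖ ^ 2) := by ring
    linarith
  have hrhs : Real.sqrt (2 * ρ * D ^ 2 / (μ ^ 2) ^ 2) = Real.sqrt (2 * ρ) * D / μ ^ 2 := by
    rw [show 2 * ρ * D ^ 2 / (μ ^ 2) ^ 2 = (2 * ρ) * (D / μ ^ 2) ^ 2 by ring,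
      Real.sqrt_mul (by linarith), Real.sqrt_sq (by positivity)]
    ring
  calc ‖d‖ ≤ Real.sqrt (2 * ρ * D ^ 2 / (μ ^ 2) ^ 2) :=
        (Real.le_sqrt (norm_nonneg d) (by positivity)).mpr hdsq
    _ = Real.sqrt (2 * ρ) * D / μ ^ 2 := hrhs
end

section
/- Let E = EuclideanSpace ℝ (Fin m), let u_ref ∈ E, let W, Ŵ : E → E be symmetric linear maps with ⟪v, W v⟫ ≥ μ²·‖v‖² for all v (μ > 0) and ‖Ŵ − W‖ ≤ ρ in operator norm. Define φ(u) := (1/2)·⟪u − u_ref, W(u − u_ref)⟫ and φ̂(u) := (1/2)·⟪u − u_ref, Ŵ(u − u_ref)⟫, let 𝒰 ⊆ E, let u_W ∈ 𝒰 minimize φ over 𝒰 and û_W ∈ 𝒰 minimize φ̂ over 𝒰, and assume u_W, û_W ∈ 𝒮 := {u : ⟪u − u_ref, W(u − u_ref)⟫ ≤ D²} for some D > 0. Then φ(û_W) − φ(u_W) ≤ ρ·D²/μ². -/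
open scoped RealInnerProductSpace

/-- Suboptimality of the learned projection in the ideal
objective: if `u_W` minimizes `φ` and `û_W` minimizes `φ̂` over `𝒰`, both lie
in the weighted ball `𝒮` of radius `D`, `W ⪰ μ²·I`, and `‖Ŵ − W‖ ≤ ρ`, then
`φ(û_W) − φ(u_W) ≤ ρD²/μ²`. -/
theorem learned_projection_objective_gap
    (m : ℕ) (u_ref : EuclideanSpace ℝ (Fin m))
    (W Wh : EuclideanSpace ℝ (Fin m) →L[ℝ] EuclideanSpace ℝ (Fin m))
    (hWsym : ∀ v w : EuclideanSpace ℝ (Fin m), ⟪W v, w⟫ = ⟪v, W w⟫)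
    (hWhsym : ∀ v w : EuclideanSpace ℝ (Fin m), ⟪Wh v, w⟫ = ⟪v, Wh w⟫)
    (μ : ℝ) (hμ : 0 < μ)
    (hWlb : ∀ v : EuclideanSpace ℝ (Fin m), μ ^ 2 * ‖v‖ ^ 2 ≤ ⟪v, W v⟫)
    (ρ : ℝ) (herr : ‖Wh - W‖ ≤ ρ)
    (φ φh : EuclideanSpace ℝ (Fin m) → ℝ)
    (hφ : ∀ u, φ u = (1 / 2) * ⟪u - u_ref, W (u - u_ref)⟫)
    (hφh : ∀ u, φh u = (1 / 2) * ⟪u - u_ref, Wh (u - u_ref)⟫)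
    (𝒰 : Set (EuclideanSpace ℝ (Fin m)))
    (uW uhW : EuclideanSpace ℝ (Fin m))
    (huW : uW ∈ 𝒰) (huhW : uhW ∈ 𝒰)
    (huWmin : ∀ u ∈ 𝒰, φ uW ≤ φ u)
    (huhWmin : ∀ u ∈ 𝒰, φh uhW ≤ φh u)
    (D : ℝ) (hD : 0 < D)
    (S : Set (EuclideanSpace ℝ (Fin m)))
    (hS : S = {u | ⟪u - u_ref, W (u - u_ref)⟫ ≤ D ^ 2})
    (huWS : uW ∈ S) (huhWS : uhW ∈ S) :
    φ uhW - φ uW ≤ ρ * D ^ 2 / μ ^ 2 := by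
  subst hS
  simp only [Set.mem_setOf_eq] at huWS huhWS
  have hρ0 : 0 ≤ ρ := le_trans (norm_nonneg _) herr
  -- bilinear error bound
  have key : ∀ v : EuclideanSpace ℝ (Fin m), |⟪v, Wh v - W v⟫| ≤ ρ * ‖v‖ ^ 2 := by
    intro v
    have h1 : |⟪v, (Wh - W) v⟫| ≤ ‖v‖ * ‖(Wh - W) v‖ := abs_real_inner_le_norm _ _
    have h2 : ‖(Wh - W) v‖ ≤ ‖Wh - W‖ * ‖v‖ := (Wh - W).le_opNorm v
    have : |⟪v, (Wh - W) v⟫| ≤ ‖v‖ * (‖Wh - W‖ * ‖v‖) :=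
      h1.trans (by nlinarith [norm_nonneg v])
    calc |⟪v, Wh v - W v⟫| = |⟪v, (Wh - W) v⟫| := by
          simp [ContinuousLinearMap.sub_apply]
      _ ≤ ‖v‖ * (‖Wh - W‖ * ‖v‖) := this
      _ ≤ ρ * ‖v‖ ^ 2 := by nlinarith [norm_nonneg v]
  -- norm bound in S
  have nb : ∀ v : EuclideanSpace ℝ (Fin m), ⟪v, W v⟫ ≤ D ^ 2 → ‖v‖ ^ 2 ≤ D ^ 2 / μ ^ 2 := by
    intro v hv
    have := hWlb v
    rw [le_div_iff₀ (by positivity)]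
    nlinarith
  have na := nb _ huhWS
  have nbb := nb _ huWS
  have hmid : φh uhW ≤ φh uW := huhWmin _ huW
  have e1 : φ uhW - φh uhW ≤ (1/2) * (ρ * ‖uhW - u_ref‖ ^ 2) := by
    rw [hφ, hφh]
    have := key (uhW - u_ref)
    have h := abs_le.mp this
    have : ⟪uhW - u_ref, Wh (uhW - u_ref) - W (uhW - u_ref)⟫
        = ⟪uhW - u_ref, Wh (uhW - u_ref)⟫ - ⟪uhW - u_ref, W (uhW - u_ref)⟫ := by
      rw [inner_sub_right]
    linarith [h.1]
  have e2 : φh uW - φ uW ≤ (1/2) * (ρ * ‖uW - u_ref‖ ^ 2) := by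
    rw [hφ, hφh]
    have := key (uW - u_ref)
    have h := abs_le.mp this
    have : ⟪uW - u_ref, Wh (uW - u_ref) - W (uW - u_ref)⟫
        = ⟪uW - u_ref, Wh (uW - u_ref)⟫ - ⟪uW - u_ref, W (uW - u_ref)⟫ := by
      rw [inner_sub_right]
    linarith [h.2]
  have hμ2 : (0:ℝ) < μ ^ 2 := by positivity
  have : ρ * ‖uhW - u_ref‖ ^ 2 ≤ ρ * (D ^ 2 / μ ^ 2) := by nlinarith
  have : ρ * ‖uW - u_ref‖ ^ 2 ≤ ρ * (D ^ 2 / μ ^ 2) := by nlinarith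
  have hdiv : ρ * (D ^ 2 / μ ^ 2) = ρ * D ^ 2 / μ ^ 2 := by ring
  linarith [e1, e2, hmid,
    (by nlinarith : ρ * ‖uhW - u_ref‖ ^ 2 ≤ ρ * D ^ 2 / μ ^ 2),
    (by nlinarith : ρ * ‖uW - u_ref‖ ^ 2 ≤ ρ * D ^ 2 / μ ^ 2)]
end

section
/- Let E = EuclideanSpace ℝ (Fin m) and let Q : E → ℝ be twice continuously differentiable with Hessian H(u) := ∇²Q(u) satisfying ‖H(u) − H(v)‖ ≤ L₂·‖u − v‖ for all u, v (L₂ > 0) and ∇Q(u_ref) = 0. Let W := −H(u_ref), 𝒮 := {u : W(u − u_ref, u − u_ref) ≤ D²} with D > 0, assume H(u)(v,v) ≤ −μ²·‖v‖² for all u ∈ 𝒮 and all v (μ > 0), and let G ≥ 0 be such that ‖∇Q(u)‖ ≤ G for all u ∈ 𝒮. Let 𝒰 ⊆ E be convex, let u_W ∈ 𝒰 minimize u ↦ W(u − u_ref, u − u_ref) over 𝒰, let u⋆ ∈ 𝒰 maximize Q over 𝒰, and let û_W ∈ 𝒰 minimize u ↦ Ŵ(u − u_ref, u − u_ref) over 𝒰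 for some symmetric bilinear form Ŵ with ‖Ŵ − W‖ ≤ ρ, 0 ≤ ρ < μ². If u_W, û_W, u⋆ ∈ 𝒮 and the segment from u_W to û_W lies in 𝒮, then |Q(û_W) − Q(u⋆)| ≤ L₂·D³/(3·μ³) + G·√(2ρ)·D/μ². -/
set_option maxHeartbeats 1000000

lemma taylor2_aux {m : ℕ}
    (Q : EuclideanSpace ℝ (Fin m) → ℝ) (hQ : ContDiff ℝ 2 Q)
    (H : EuclideanSpace ℝ (Fin m) →
      EuclideanSpace ℝ (Fin m) →L[ℝ] EuclideanSpace ℝ (Fin m) →L[ℝ] ℝ)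
    (hH : ∀ u, H u = fderiv ℝ (fderiv ℝ Q) u)
    (L₂ : ℝ) (hL₂ : 0 ≤ L₂)
    (hLip : ∀ u v, ‖H u - H v‖ ≤ L₂ * ‖u - v‖)
    (a b : EuclideanSpace ℝ (Fin m)) :
    |Q b - Q a - fderiv ℝ Q a (b - a) - (1/2) * H a (b - a) (b - a)|
      ≤ L₂ * ‖b - a‖ ^ 3 / 6 := by
  set δ := b - a with hδ
  set γ : ℝ → EuclideanSpace ℝ (Fin m) := fun t => a + t • δ with hγdef
  have hQ1 : Differentiable ℝ Q := hQ.differentiable (by norm_num)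
  have hQ'c : ContDiff ℝ 1 (fderiv ℝ Q) := hQ.fderiv_right (by norm_num)
  have hQ'd : Differentiable ℝ (fderiv ℝ Q) := hQ'c.differentiable (by norm_num)
  have hHc : Continuous H := by
    have : Continuous (fderiv ℝ (fderiv ℝ Q)) := hQ'c.continuous_fderiv (by norm_num)
    simpa [funext hH] using this
  have hγ : ∀ t : ℝ, HasDerivAt γ δ t := by
    intro t
    have h1 : HasDerivAt (fun s : ℝ => s • δ) ((1:ℝ) • δ) t :=
      (hasDerivAt_id t).smul_const δ
    have h2 := h1.const_add a
    rw [one_smul] at h2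
    exact h2
  have hγc : Continuous γ := continuous_const.add (continuous_id.smul continuous_const)
  set g1 : ℝ → ℝ := fun t => fderiv ℝ Q (γ t) δ with hg1def
  set g2 : ℝ → ℝ := fun t => H (γ t) δ δ with hg2def
  have hg : ∀ t : ℝ, HasDerivAt (fun t => Q (γ t)) (g1 t) t := fun t =>
    (hQ1 (γ t)).hasFDerivAt.comp_hasDerivAt t (hγ t)
  have hg1 : ∀ t : ℝ, HasDerivAt g1 (g2 t) t := by
    intro t
    have h1 : HasDerivAt (fun t => fderiv ℝ Q (γ t)) (H (γ t) δ) t := by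
      have := (hQ'd (γ t)).hasFDerivAt.comp_hasDerivAt t (hγ t)
      rw [hH]
      exact this
    simpa using h1.clm_apply (hasDerivAt_const t δ)
  have hg2c : Continuous g2 := by
    exact ((hHc.comp hγc).clm_apply continuous_const).clm_apply continuous_const
  set F : ℝ → ℝ := fun t => Q (γ t) + (1 - t) * g1 t with hFdef
  have hF : ∀ t : ℝ, HasDerivAt F ((1 - t) * g2 t) t := by
    intro t
    have h2 : HasDerivAt (fun t : ℝ => (1 - t) * g1 t)
        ((-1) * g1 t + (1 - t) * g2 t) t :=
      (((hasDerivAt_id t).const_sub 1)).mul (hg1 t)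
    have := (hg t).add h2
    rw [show (1 - t) * g2 t = g1 t + ((-1) * g1 t + (1 - t) * g2 t) by ring]
    exact this
  have hcont : Continuous (fun t : ℝ => (1 - t) * g2 t) :=
    (continuous_const.sub continuous_id).mul hg2c
  have hkey : ∫ t in (0:ℝ)..1, (1 - t) * g2 t = F 1 - F 0 :=
    intervalIntegral.integral_eq_sub_of_hasDerivAt (fun t _ => hF t)
      (hcont.intervalIntegrable 0 1)
  have hγ0 : γ 0 = a := by simp [hγdef]
  have hγ1 : γ 1 = b := by simp [hγdef, hδ]
  have hF1 : F 1 = Q b := by simp [hFdef, hγ1]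
  have hF0 : F 0 = Q a + fderiv ℝ Q a δ := by simp [hFdef, hg1def, hγ0]
  have hg20 : g2 0 = H a δ δ := by simp [hg2def, hγ0]
  have hhalf : (∫ t in (0:ℝ)..1, (1 - t)) = 1/2 := by
    have h := intervalIntegral.integral_sub (μ := MeasureTheory.volume) (a := (0:ℝ)) (b := 1)
      (f := fun _ => (1:ℝ)) (g := fun t => t) (continuous_const.intervalIntegrable 0 1)
      (continuous_id'.intervalIntegrable 0 1)
    rw [h, integral_id, intervalIntegral.integral_const]
    norm_num
  have hconst : ∫ t in (0:ℝ)..1, (1 - t) * g2 0 = (1/2) * g2 0 := by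
    rw [intervalIntegral.integral_mul_const, hhalf]
  have hintsub : ∫ t in (0:ℝ)..1, (1 - t) * (g2 t - g2 0)
      = (Q b - Q a - fderiv ℝ Q a δ) - (1/2) * g2 0 := by
    have h1 : ∀ t : ℝ, (1 - t) * (g2 t - g2 0)
        = (1 - t) * g2 t - (1 - t) * g2 0 := fun t => by ring
    simp_rw [h1]
    rw [intervalIntegral.integral_sub (f := fun t => (1 - t) * g2 t)
      (g := fun t => (1 - t) * g2 0) (hcont.intervalIntegrable 0 1)
      (((continuous_const.sub continuous_id').mul continuous_const).intervalIntegrable 0 1)]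
    rw [hkey, hconst, hF1, hF0]
    ring
  -- bound the integrand
  have hbound : ∀ t ∈ Set.Icc (0:ℝ) 1,
      |(1 - t) * (g2 t - g2 0)| ≤ (t - t^2) * (L₂ * ‖δ‖^3) := by
    intro t ht
    obtain ⟨ht0, ht1⟩ := ht
    have h1 : |g2 t - g2 0| ≤ L₂ * t * ‖δ‖^3 := by
      have e1 : g2 t - g2 0 = (H (γ t) - H a) δ δ := by
        simp [hg2def, hγ0, ContinuousLinearMap.sub_apply]
      rw [e1]
      have h2 : ‖(H (γ t) - H a) δ δ‖ ≤ ‖H (γ t) - H a‖ * ‖δ‖ * ‖δ‖ :=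
        le_trans (ContinuousLinearMap.le_opNorm _ δ)
          (by
            have := ContinuousLinearMap.le_opNorm (H (γ t) - H a) δ
            exact mul_le_mul_of_nonneg_right this (norm_nonneg δ))
      have h3 : ‖H (γ t) - H a‖ ≤ L₂ * (t * ‖δ‖) := by
        have := hLip (γ t) a
        have e2 : γ t - a = t • δ := by simp [hγdef]
        rw [e2, norm_smul] at this
        simpa [abs_of_nonneg ht0, Real.norm_eq_abs, mul_assoc] using this
      calc |(H (γ t) - H a) δ δ| = ‖(H (γ t) - H a) δ δ‖ := (Real.norm_eq_abs _).symm
        _ ≤ ‖H (γ t) - H a‖ * ‖δ‖ * ‖δ‖ := h2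
        _ ≤ (L₂ * (t * ‖δ‖)) * ‖δ‖ * ‖δ‖ := by
            apply mul_le_mul_of_nonneg_right (mul_le_mul_of_nonneg_right h3 (norm_nonneg δ))
              (norm_nonneg δ)
        _ = L₂ * t * ‖δ‖^3 := by ring
    rw [abs_mul, abs_of_nonneg (by linarith : (0:ℝ) ≤ 1 - t)]
    calc (1 - t) * |g2 t - g2 0| ≤ (1 - t) * (L₂ * t * ‖δ‖^3) :=
          mul_le_mul_of_nonneg_left h1 (by linarith)
      _ = (t - t^2) * (L₂ * ‖δ‖^3) := by ring
  have hintb : |∫ t in (0:ℝ)..1, (1 - t) * (g2 t - g2 0)| ≤ L₂ * ‖δ‖^3 / 6 := by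
    have h1 : |∫ t in (0:ℝ)..1, (1 - t) * (g2 t - g2 0)|
        ≤ ∫ t in (0:ℝ)..1, |(1 - t) * (g2 t - g2 0)| :=
      intervalIntegral.abs_integral_le_integral_abs zero_le_one
    have h2 : ∫ t in (0:ℝ)..1, |(1 - t) * (g2 t - g2 0)|
        ≤ ∫ t in (0:ℝ)..1, (t - t^2) * (L₂ * ‖δ‖^3) := by
      apply intervalIntegral.integral_mono_on zero_le_one
      · exact ((continuous_const.sub continuous_id).mul
          (hg2c.sub continuous_const)).abs.intervalIntegrable 0 1
      · exact (((continuous_id.sub (continuous_pow 2)).mul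
          continuous_const)).intervalIntegrable 0 1
      · exact hbound
    have h16 : (∫ t in (0:ℝ)..1, (t - t^2)) = 1/6 := by
      have h := intervalIntegral.integral_sub (μ := MeasureTheory.volume) (a := (0:ℝ)) (b := 1)
        (f := fun t => t) (g := fun t => t^2)
        (continuous_id'.intervalIntegrable 0 1)
        ((continuous_pow 2).intervalIntegrable 0 1)
      rw [h, integral_id, integral_pow]
      norm_num
    have h3 : ∫ t in (0:ℝ)..1, (t - t^2) * (L₂ * ‖δ‖^3)
        = (1/6) * (L₂ * ‖δ‖^3) := by
      rw [intervalIntegral.integral_mul_const, h16]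
    rw [h3] at h2
    calc |∫ t in (0:ℝ)..1, (1 - t) * (g2 t - g2 0)|
        ≤ (1/6) * (L₂ * ‖δ‖^3) := le_trans h1 h2
      _ = L₂ * ‖δ‖^3 / 6 := by ring
  rw [hintsub, hg20] at hintb
  have : Q b - Q a - fderiv ℝ Q a δ - (1/2) * H a δ δ
      = Q b - Q a - fderiv ℝ Q a δ - 1/2 * H a δ δ := by ring
  simpa [hδ] using hintb

lemma vi_aux {m : ℕ}
    (B : EuclideanSpace ℝ (Fin m) →L[ℝ] EuclideanSpace ℝ (Fin m) →L[ℝ] ℝ)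
    (hsym : ∀ v w, B v w = B w v)
    (𝒰 : Set (EuclideanSpace ℝ (Fin m))) (h𝒰 : Convex ℝ 𝒰)
    (r x u : EuclideanSpace ℝ (Fin m)) (hx : x ∈ 𝒰) (hu : u ∈ 𝒰)
    (hmin : ∀ y ∈ 𝒰, B (x - r) (x - r) ≤ B (y - r) (y - r)) :
    0 ≤ B (x - r) (u - x) := by
  by_contra hc
  push_neg at hc
  set c := B (x - r) (u - x) with hcdef
  set q := B (u - x) (u - x) with hqdef
  set t := min 1 (-c / (|q| + 1)) with htdef
  have hq1 : (0:ℝ) < |q| + 1 := by positivity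
  have ht0 : 0 < t := lt_min one_pos (div_pos (neg_pos.mpr hc) hq1)
  have ht1 : t ≤ 1 := min_le_left _ _
  have htle : t * (|q| + 1) ≤ -c := by
    have := min_le_right 1 (-c / (|q| + 1))
    calc t * (|q| + 1) ≤ (-c / (|q| + 1)) * (|q| + 1) :=
          mul_le_mul_of_nonneg_right this hq1.le
      _ = -c := by field_simp
  have hy : x + t • (u - x) ∈ 𝒰 := by
    have h := h𝒰 hx hu (by linarith : (0:ℝ) ≤ 1 - t) ht0.le (by ring)
    have e : (1 - t) • x + t • u = x + t • (u - x) := by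
      rw [smul_sub, sub_smul, one_smul]; abel
    rwa [e] at h
  have hexp : B (x + t • (u - x) - r) (x + t • (u - x) - r)
      = B (x - r) (x - r) + 2 * t * c + t ^ 2 * q := by
    have e : x + t • (u - x) - r = (x - r) + t • (u - x) := by abel
    rw [e]
    simp only [map_add, map_smul, ContinuousLinearMap.add_apply,
      ContinuousLinearMap.smul_apply, smul_eq_mul]
    rw [hsym (u - x) (x - r)]
    ring
  have h2 := hmin _ hy
  rw [hexp] at h2
  have h3 : 0 ≤ 2 * t * c + t ^ 2 * q := by linarith
  have h4 : t * q ≤ -c := by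
    calc t * q ≤ t * |q| := mul_le_mul_of_nonneg_left (le_abs_self q) ht0.le
      _ ≤ t * (|q| + 1) := by nlinarith
      _ ≤ -c := htle
  nlinarith [mul_le_mul_of_nonneg_left h4 ht0.le, mul_pos ht0 (neg_pos.mpr hc)]
/-- Theorem 3: Near-optimality under training error. With A1–A2,
a gradient bound `G` on `𝒮`, and a learned symmetric weighting `Ŵ` with
`‖Ŵ − W‖ ≤ ρ < μ²`, the learned weighted projection `û_W` satisfies
`|Q(û_W) − Q(u⋆)| ≤ L₂D³/(3μ³) + G√(2ρ)D/μ²`. -/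
theorem learned_weighted_projection_near_optimality
    (m : ℕ)
    (Q : EuclideanSpace ℝ (Fin m) → ℝ)
    (hQ : ContDiff ℝ 2 Q)
    (u_ref : EuclideanSpace ℝ (Fin m))
    (H : EuclideanSpace ℝ (Fin m) →
      EuclideanSpace ℝ (Fin m) →L[ℝ] EuclideanSpace ℝ (Fin m) →L[ℝ] ℝ)
    (hH : ∀ u, H u = fderiv ℝ (fderiv ℝ Q) u)
    (L₂ : ℝ) (hL₂ : 0 < L₂)
    (hLip : ∀ u v, ‖H u - H v‖ ≤ L₂ * ‖u - v‖)
    (hgrad : fderiv ℝ Q u_ref = 0)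
    (W : EuclideanSpace ℝ (Fin m) →L[ℝ] EuclideanSpace ℝ (Fin m) →L[ℝ] ℝ)
    (hW : W = -H u_ref)
    (D : ℝ) (hD : 0 < D)
    (S : Set (EuclideanSpace ℝ (Fin m)))
    (hS : S = {u | W (u - u_ref) (u - u_ref) ≤ D ^ 2})
    (μ : ℝ) (hμ : 0 < μ)
    (hcurv : ∀ u ∈ S, ∀ v : EuclideanSpace ℝ (Fin m),
      H u v v ≤ -μ ^ 2 * ‖v‖ ^ 2)
    (G : ℝ) (hG0 : 0 ≤ G)
    (hGbound : ∀ u ∈ S, ‖fderiv ℝ Q u‖ ≤ G)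
    (𝒰 : Set (EuclideanSpace ℝ (Fin m))) (h𝒰 : Convex ℝ 𝒰)
    (uW uStar uhW : EuclideanSpace ℝ (Fin m))
    (huW𝒰 : uW ∈ 𝒰) (huStar𝒰 : uStar ∈ 𝒰) (huhW𝒰 : uhW ∈ 𝒰)
    (huWmin : ∀ u ∈ 𝒰, W (uW - u_ref) (uW - u_ref) ≤ W (u - u_ref) (u - u_ref))
    (huStarmax : ∀ u ∈ 𝒰, Q u ≤ Q uStar)
    (Wh : EuclideanSpace ℝ (Fin m) →L[ℝ] EuclideanSpace ℝ (Fin m) →L[ℝ] ℝ)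
    (hWhsym : ∀ v w : EuclideanSpace ℝ (Fin m), Wh v w = Wh w v)
    (ρ : ℝ) (hρ0 : 0 ≤ ρ) (hρμ : ρ < μ ^ 2)
    (herr : ‖Wh - W‖ ≤ ρ)
    (huhWmin : ∀ u ∈ 𝒰,
      Wh (uhW - u_ref) (uhW - u_ref) ≤ Wh (u - u_ref) (u - u_ref))
    (huWS : uW ∈ S) (huhWS : uhW ∈ S) (huStarS : uStar ∈ S)
    (hseg : segment ℝ uW uhW ⊆ S) :
    |Q uhW - Q uStar| ≤
      L₂ * D ^ 3 / (3 * μ ^ 3) + G * Real.sqrt (2 * ρ) * D / μ ^ 2 := by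
  have hQ1 : Differentiable ℝ Q := hQ.differentiable (by norm_num)
  have hQ'd : Differentiable ℝ (fderiv ℝ Q) :=
    (hQ.fderiv_right (by norm_num : (1:WithTop ℕ∞) + 1 ≤ 2)).differentiable (by norm_num)
  -- symmetry of W
  have hWsym : ∀ v w, W v w = W w v := by
    intro v w
    have h := second_derivative_symmetric (f := Q) (f' := fderiv ℝ Q)
      (f'' := H u_ref) (fun y => (hQ1 y).hasFDerivAt)
      (by rw [hH]; exact (hQ'd u_ref).hasFDerivAt) v w
    rw [hW]
    simp only [ContinuousLinearMap.neg_apply]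
    rw [h]
  -- u_ref ∈ S
  have hrefS : u_ref ∈ S := by
    rw [hS]
    simp only [Set.mem_setOf_eq, sub_self, map_zero, ContinuousLinearMap.zero_apply]
    positivity
  -- lower bound on W
  have hWlower : ∀ v, μ ^ 2 * ‖v‖ ^ 2 ≤ W v v := by
    intro v
    have h := hcurv u_ref hrefS v
    rw [hW]
    simp only [ContinuousLinearMap.neg_apply]
    linarith
  -- norm bound on S
  have hnorm : ∀ u ∈ S, μ * ‖u - u_ref‖ ≤ D := by
    intro u hu
    rw [hS] at hu
    have h1 := hWlower (u - u_ref)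
    have h2 : μ ^ 2 * ‖u - u_ref‖ ^ 2 ≤ D ^ 2 := le_trans h1 hu
    nlinarith [sq_nonneg (μ * ‖u - u_ref‖ - D), norm_nonneg (u - u_ref)]
  have hnorm' : ∀ u ∈ S, ‖u - u_ref‖ ≤ D / μ := fun u hu =>
    (le_div_iff₀ hμ).mpr (by rw [mul_comm]; exact hnorm u hu)
  -- Taylor bounds
  have hHW : ∀ v : EuclideanSpace ℝ (Fin m), H u_ref v v = -(W v v) := by
    intro v
    rw [hW]; simp [ContinuousLinearMap.neg_apply]
  have hT : ∀ u : EuclideanSpace ℝ (Fin m),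
      |Q u - Q u_ref + (1/2) * W (u - u_ref) (u - u_ref)|
        ≤ L₂ * ‖u - u_ref‖ ^ 3 / 6 := by
    intro u
    have h := taylor2_aux Q hQ H hH L₂ hL₂.le hLip u_ref u
    rw [hgrad] at h
    simp only [ContinuousLinearMap.zero_apply, sub_zero] at h
    rw [hHW] at h
    have e : Q u - Q u_ref - 1/2 * -(W (u - u_ref) (u - u_ref))
        = Q u - Q u_ref + (1/2) * W (u - u_ref) (u - u_ref) := by ring
    rw [e] at h
    exact h
  have hcube : ∀ u ∈ S, ‖u - u_ref‖ ^ 3 ≤ D ^ 3 / μ ^ 3 := by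
    intro u hu
    have h := hnorm' u hu
    calc ‖u - u_ref‖ ^ 3 ≤ (D / μ) ^ 3 :=
          pow_le_pow_left₀ (norm_nonneg _) h 3
      _ = D ^ 3 / μ ^ 3 := div_pow D μ 3
  -- gap2 : Q uStar - Q uW ≤ L₂ D³/(3μ³)
  have hTS := abs_le.mp (hT uStar)
  have hTW := abs_le.mp (hT uW)
  have hcS := hcube uStar huStarS
  have hcW := hcube uW huWS
  have hmono := huWmin uStar huStar𝒰
  have gap2 : Q uStar - Q uW ≤ L₂ * D ^ 3 / (3 * μ ^ 3) := by
    have e : L₂ * D ^ 3 / (3 * μ ^ 3)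
        = L₂ * (D ^ 3 / μ ^ 3) / 6 + L₂ * (D ^ 3 / μ ^ 3) / 6 := by ring
    rw [e]
    have b1 : L₂ * ‖uStar - u_ref‖ ^ 3 / 6 ≤ L₂ * (D ^ 3 / μ ^ 3) / 6 := by
      have := mul_le_mul_of_nonneg_left hcS hL₂.le
      linarith
    have b2 : L₂ * ‖uW - u_ref‖ ^ 3 / 6 ≤ L₂ * (D ^ 3 / μ ^ 3) / 6 := by
      have := mul_le_mul_of_nonneg_left hcW hL₂.le
      linarith
    linarith [hTS.1, hTS.2, hTW.1, hTW.2]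
  -- variational inequalities
  have h1 : 0 ≤ W (uW - u_ref) (uhW - uW) :=
    vi_aux W hWsym 𝒰 h𝒰 u_ref uW uhW huW𝒰 huhW𝒰 huWmin
  have h2 : 0 ≤ Wh (uhW - u_ref) (uW - uhW) :=
    vi_aux Wh hWhsym 𝒰 h𝒰 u_ref uhW uW huhW𝒰 huW𝒰 huhWmin
  set d := uhW - uW with hd
  have hWhneg : Wh (uhW - u_ref) d ≤ 0 := by
    have e : uW - uhW = -d := by rw [hd]; abel
    rw [e] at h2
    simp only [map_neg] at h2
    linarith
  have hsplit : W (uhW - u_ref) d = W (uW - u_ref) d + W d d := by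
    have e : uhW - u_ref = (uW - u_ref) + d := by rw [hd]; abel
    rw [e, map_add, ContinuousLinearMap.add_apply]
  have hdiff : W (uhW - u_ref) d ≤ ρ * ‖uhW - u_ref‖ * ‖d‖ := by
    have e : W (uhW - u_ref) d = (W - Wh) (uhW - u_ref) d + Wh (uhW - u_ref) d := by
      simp [ContinuousLinearMap.sub_apply]
    rw [e]
    have e2 : (W - Wh) (uhW - u_ref) d = -((Wh - W) (uhW - u_ref) d) := by
      simp only [ContinuousLinearMap.sub_apply]
      ring
    have hb1 : (W - Wh) (uhW - u_ref) d ≤ ‖Wh - W‖ * ‖uhW - u_ref‖ * ‖d‖ := by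
      rw [e2]
      calc -((Wh - W) (uhW - u_ref) d) ≤ |(Wh - W) (uhW - u_ref) d| := neg_le_abs _
        _ = ‖(Wh - W) (uhW - u_ref) d‖ := (Real.norm_eq_abs _).symm
        _ ≤ ‖(Wh - W) (uhW - u_ref)‖ * ‖d‖ := ContinuousLinearMap.le_opNorm _ _
        _ ≤ ‖Wh - W‖ * ‖uhW - u_ref‖ * ‖d‖ :=
            mul_le_mul_of_nonneg_right (ContinuousLinearMap.le_opNorm _ _) (norm_nonneg _)
    have hb2 : ‖Wh - W‖ * ‖uhW - u_ref‖ * ‖d‖ ≤ ρ * ‖uhW - u_ref‖ * ‖d‖ := by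
      apply mul_le_mul_of_nonneg_right _ (norm_nonneg _)
      exact mul_le_mul_of_nonneg_right herr (norm_nonneg _)
    linarith
  have hchain : μ ^ 3 * ‖d‖ ^ 2 ≤ ρ * D * ‖d‖ := by
    have hWdd : μ ^ 2 * ‖d‖ ^ 2 ≤ W d d := hWlower d
    have h3 : W d d ≤ ρ * ‖uhW - u_ref‖ * ‖d‖ := by
      have := hsplit
      linarith
    have h4 : μ ^ 2 * ‖d‖ ^ 2 ≤ ρ * ‖uhW - u_ref‖ * ‖d‖ := le_trans hWdd h3
    have h5 : μ * ‖uhW - u_ref‖ ≤ D := hnorm uhW huhWS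
    have h6 : μ * (μ ^ 2 * ‖d‖ ^ 2) ≤ μ * (ρ * ‖uhW - u_ref‖ * ‖d‖) :=
      mul_le_mul_of_nonneg_left h4 hμ.le
    have h7 : μ * (ρ * ‖uhW - u_ref‖ * ‖d‖) ≤ D * (ρ * ‖d‖) := by
      have h7a := mul_le_mul_of_nonneg_right h5 (mul_nonneg hρ0 (norm_nonneg d))
      calc μ * (ρ * ‖uhW - u_ref‖ * ‖d‖) = (μ * ‖uhW - u_ref‖) * (ρ * ‖d‖) := by ring
        _ ≤ D * (ρ * ‖d‖) := h7a
    calc μ ^ 3 * ‖d‖ ^ 2 = μ * (μ ^ 2 * ‖d‖ ^ 2) := by ring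
      _ ≤ D * (ρ * ‖d‖) := le_trans h6 h7
      _ = ρ * D * ‖d‖ := by ring
  have hdle : ‖d‖ ≤ ρ * D / μ ^ 3 := by
    rcases eq_or_lt_of_le (norm_nonneg d) with h0 | h0
    · rw [← h0]; positivity
    · rw [le_div_iff₀ (by positivity : (0:ℝ) < μ ^ 3)]
      have h8 : (‖d‖ * μ ^ 3) * ‖d‖ ≤ (ρ * D) * ‖d‖ := by
        calc (‖d‖ * μ ^ 3) * ‖d‖ = μ ^ 3 * ‖d‖ ^ 2 := by ring
          _ ≤ ρ * D * ‖d‖ := hchain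
          _ = (ρ * D) * ‖d‖ := by ring
      exact le_of_mul_le_mul_right h8 h0
  -- √(2ρ) comparison
  have hsq : ρ * D / μ ^ 3 ≤ Real.sqrt (2 * ρ) * D / μ ^ 2 := by
    have hs1 : ρ ≤ Real.sqrt (2 * ρ) * μ := by
      have h1 : Real.sqrt ρ ≤ μ := by
        have := Real.sqrt_le_sqrt hρμ.le
        rwa [Real.sqrt_sq hμ.le] at this
      have h2 : Real.sqrt ρ ≤ Real.sqrt (2 * ρ) :=
        Real.sqrt_le_sqrt (by linarith)
      calc ρ = Real.sqrt ρ * Real.sqrt ρ := (Real.mul_self_sqrt hρ0).symm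
        _ ≤ Real.sqrt (2 * ρ) * μ :=
            mul_le_mul h2 h1 (Real.sqrt_nonneg _) (Real.sqrt_nonneg _)
    rw [div_le_div_iff₀ (by positivity) (by positivity)]
    calc ρ * D * μ ^ 2 ≤ (Real.sqrt (2 * ρ) * μ) * D * μ ^ 2 :=
          mul_le_mul_of_nonneg_right (mul_le_mul_of_nonneg_right hs1 hD.le) (by positivity)
      _ = Real.sqrt (2 * ρ) * D * μ ^ 3 := by ring
  -- mean value on segment
  have hMV : |Q uhW - Q uW| ≤ G * ‖d‖ := by
    have h := (convex_segment uW uhW).norm_image_sub_le_of_norm_fderiv_le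
      (fun x _ => hQ1 x)
      (fun x hx => hGbound x (hseg hx))
      (left_mem_segment ℝ uW uhW) (right_mem_segment ℝ uW uhW)
    rwa [Real.norm_eq_abs] at h
  -- combine
  have hpos : 0 ≤ Q uStar - Q uhW := sub_nonneg.mpr (huStarmax uhW huhW𝒰)
  have habs : |Q uhW - Q uStar| = Q uStar - Q uhW := by
    rw [abs_sub_comm, abs_of_nonneg hpos]
  rw [habs]
  have hG1 : G * ‖d‖ ≤ G * (Real.sqrt (2 * ρ) * D / μ ^ 2) :=
    mul_le_mul_of_nonneg_left (le_trans hdle hsq) hG0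
  have hM := abs_le.mp hMV
  have e : G * (Real.sqrt (2 * ρ) * D / μ ^ 2) = G * Real.sqrt (2 * ρ) * D / μ ^ 2 := by
    ring
  linarith [hM.1, hM.2]
end

section
/- Let E = EuclideanSpace ℝ (Fin m) and let Q : E → ℝ be twice continuously differentiable with Hessian H(u) := ∇²Q(u) satisfying ‖H(u) − H(v)‖ ≤ L₂·‖u − v‖ for all u, v (L₂ > 0) and ∇Q(u_ref) = 0. Let W := −H(u_ref), 𝒮 := {u : W(u − u_ref, u − u_ref) ≤ D²} with D > 0, assume H(u)(v,v) ≤ −μ²·‖v‖² for all u ∈ 𝒮 and all v (μ > 0), and let G ≥ 0 satisfy ‖∇Q(u)‖ ≤ G for all u ∈ 𝒮. Let 𝒰 ⊆ E be convex, let u_W ∈ 𝒰 minimize u ↦ W(u − u_ref, u − u_ref) over 𝒰, let û_W ∈ 𝒰 minimize u ↦ Ŵ(u − u_ref, u − u_ref) over 𝒰 for a symmetric bilinear form Ŵ with ‖Ŵ − W‖ ≤ ρ, 0 ≤ ρ < μ², and let u_I ∈ 𝒰. Assume u_W, û_W, u_I ∈ 𝒮 and the segment from u_W to û_W lies in 𝒮.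 Write δ := ‖u_W − u_ref‖_W > 0, suppose ‖u_I − u_ref‖_W = β·δ for some β > 1, and set c := (β² − 1)/2. Then Q(û_W) − Q(u_I) ≥ c·δ² − L₂·D³/(3·μ³) − G·√(2ρ)·D/μ². -/
set_option maxHeartbeats 1000000 in

open intervalIntegral in
lemma taylor_two_bound {E : Type*} [NormedAddCommGroup E] [NormedSpace ℝ E]
    (Q : E → ℝ) (hQ : ContDiff ℝ 2 Q) (r : E)
    (H : E → E →L[ℝ] E →L[ℝ] ℝ) (hH : ∀ u, H u = fderiv ℝ (fderiv ℝ Q) u)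
    (L₂ : ℝ) (hL₂ : 0 ≤ L₂) (hLip : ∀ u v, ‖H u - H v‖ ≤ L₂ * ‖u - v‖)
    (hgrad : fderiv ℝ Q r = 0) (u : E) :
    |Q u - Q r - (1/2) * H r (u - r) (u - r)| ≤ L₂ / 6 * ‖u - r‖ ^ 3 := by
  set v := u - r with hv
  have hQdiff : Differentiable ℝ Q := hQ.differentiable two_ne_zero
  have hFcd : ContDiff ℝ 1 (fderiv ℝ Q) := hQ.fderiv_right (by norm_num)
  have hFdiff : Differentiable ℝ (fderiv ℝ Q) := hFcd.differentiable one_ne_zero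
  have hc : ∀ t : ℝ, HasDerivAt (fun s : ℝ => r + s • v) v t := fun t => by
    simpa using ((hasDerivAt_id t).smul_const v).const_add r
  set g' : ℝ → ℝ := fun t => fderiv ℝ Q (r + t • v) v with hg'def
  have hg : ∀ t : ℝ, HasDerivAt (fun s : ℝ => Q (r + s • v)) (g' t) t := fun t =>
    (hQdiff (r + t • v)).hasFDerivAt.comp_hasDerivAt t (hc t)
  have hg' : ∀ t : ℝ, HasDerivAt g' (H (r + t • v) v v) t := by
    intro t
    have h1 : HasDerivAt (fun s : ℝ => fderiv ℝ Q (r + s • v)) (H (r + t • v) v) t := by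
      have := (hFdiff (r + t • v)).hasFDerivAt.comp_hasDerivAt t (hc t)
      rw [hH]
      exact this
    have := h1.clm_apply (hasDerivAt_const t v)
    simpa using this
  -- continuity of the second derivative along the segment
  have hHlip : LipschitzWith (Real.toNNReal L₂) H := by
    apply LipschitzWith.of_dist_le_mul
    intro x y
    simpa [dist_eq_norm, Real.coe_toNNReal L₂ hL₂] using hLip x y
  have hcont2 : Continuous fun t : ℝ => H (r + t • v) v v := by
    have h1 : Continuous fun t : ℝ => r + t • v :=
      continuous_const.add (continuous_id.smul continuous_const)
    exact (((hHlip.continuous.comp h1).clm_apply continuous_const).clm_apply continuous_const)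
  have hg'0 : g' 0 = 0 := by simp [hg'def, hgrad]
  -- integrand bound
  have hbnd : ∀ s : ℝ, 0 ≤ s → |H (r + s • v) v v - H r v v| ≤ L₂ * ‖v‖ ^ 3 * s := by
    intro s hs
    have h1 : H (r + s • v) v v - H r v v = ((H (r + s • v) - H r) v) v := by
      simp [ContinuousLinearMap.sub_apply]
    rw [h1, ← Real.norm_eq_abs]
    calc ‖((H (r + s • v) - H r) v) v‖ ≤ ‖(H (r + s • v) - H r) v‖ * ‖v‖ :=
          ((H (r + s • v) - H r) v).le_opNorm v
      _ ≤ ‖H (r + s • v) - H r‖ * ‖v‖ * ‖v‖ := by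
          gcongr; exact (H (r + s • v) - H r).le_opNorm v
      _ ≤ L₂ * ‖r + s • v - r‖ * ‖v‖ * ‖v‖ := by gcongr ?_ * ‖v‖ * ‖v‖; exact hLip _ _
      _ = L₂ * ‖v‖ ^ 3 * s := by
          simp [norm_smul, abs_of_nonneg hs]; ring
  -- bound on k t := g' t - t * H r v v for t ∈ [0,1]
  set k : ℝ → ℝ := fun t => g' t - t * H r v v with hkdef
  have hk : ∀ t : ℝ, HasDerivAt k (H (r + t • v) v v - H r v v) t := fun t =>
    (hg' t).sub (hasDerivAt_mul_const _)
  have hkcont : Continuous fun s => H (r + s • v) v v - H r v v :=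
    hcont2.sub continuous_const
  have hkbound : ∀ t ∈ Set.Icc (0:ℝ) 1, |k t| ≤ L₂ * ‖v‖ ^ 3 * t ^ 2 / 2 := by
    intro t ht
    have hftc : ∫ s in (0:ℝ)..t, (H (r + s • v) v v - H r v v) = k t - k 0 :=
      integral_eq_sub_of_hasDerivAt (fun s _ => hk s)
        (hkcont.intervalIntegrable 0 t)
    have hk0 : k 0 = 0 := by simp [hkdef, hg'0]
    rw [hk0, sub_zero] at hftc
    rw [← hftc, ← Real.norm_eq_abs]
    have : ∀ᵐ s ∂MeasureTheory.volume.restrict (Set.uIoc (0:ℝ) t),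
        ‖H (r + s • v) v v - H r v v‖ ≤ L₂ * ‖v‖ ^ 3 * s := by
      apply MeasureTheory.ae_restrict_of_forall_mem measurableSet_uIoc
      intro s hs
      rw [Set.uIoc_of_le ht.1] at hs
      exact (Real.norm_eq_abs _) ▸ hbnd s hs.1.le
    calc ‖∫ s in (0:ℝ)..t, (H (r + s • v) v v - H r v v)‖
        ≤ |∫ s in (0:ℝ)..t, L₂ * ‖v‖ ^ 3 * s| :=
          norm_integral_le_abs_of_norm_le this
            ((continuous_const.mul continuous_id).intervalIntegrable 0 t)
      _ = L₂ * ‖v‖ ^ 3 * t ^ 2 / 2 := by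
          rw [show (∫ s in (0:ℝ)..t, L₂ * ‖v‖ ^ 3 * s) = L₂ * ‖v‖ ^ 3 * t ^ 2 / 2 from by
            rw [integral_const_mul, integral_id]; ring]
          exact abs_of_nonneg (by positivity)
  -- final FTC
  have hg'cont : Continuous g' :=
    ((hFcd.continuous.comp (continuous_const.add (continuous_id.smul continuous_const))).clm_apply
      continuous_const)
  have hkcont' : Continuous k := hg'cont.sub (continuous_id.mul continuous_const)
  have hftc2 : ∫ t in (0:ℝ)..1, k t = (Q u - Q r) - (1/2) * H r v v := by
    have h1 : ∫ t in (0:ℝ)..1, g' t = Q (r + (1:ℝ) • v) - Q (r + (0:ℝ) • v) :=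
      integral_eq_sub_of_hasDerivAt (fun t _ => hg t) (hg'cont.intervalIntegrable 0 1)
    have h2 : ∫ t in (0:ℝ)..1, t * H r v v = (1/2) * H r v v := by
      rw [intervalIntegral.integral_mul_const, integral_id]; ring
    show (∫ t in (0:ℝ)..1, (g' t - t * H r v v)) = Q u - Q r - 1 / 2 * H r v v
    rw [intervalIntegral.integral_sub (hg'cont.intervalIntegrable 0 1)
      ((show Continuous fun t : ℝ => t * H r v v from continuous_id'.mul continuous_const).intervalIntegrable 0 1), h1, h2]
    simp [hv]
  rw [← hftc2, ← Real.norm_eq_abs]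
  have hae : ∀ᵐ t ∂MeasureTheory.volume.restrict (Set.uIoc (0:ℝ) 1),
      ‖k t‖ ≤ L₂ * ‖v‖ ^ 3 * t ^ 2 / 2 := by
    apply MeasureTheory.ae_restrict_of_forall_mem measurableSet_uIoc
    intro t ht
    rw [Set.uIoc_of_le zero_le_one] at ht
    exact (Real.norm_eq_abs _) ▸ hkbound t ⟨ht.1.le, ht.2⟩
  calc ‖∫ t in (0:ℝ)..1, k t‖ ≤ |∫ t in (0:ℝ)..1, L₂ * ‖v‖ ^ 3 * t ^ 2 / 2| :=
        norm_integral_le_abs_of_norm_le hae (((continuous_const.mul (continuous_pow 2)).div_const 2).intervalIntegrable 0 1)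
    _ = L₂ / 6 * ‖v‖ ^ 3 := by
        have : ∫ t in (0:ℝ)..1, L₂ * ‖v‖ ^ 3 * t ^ 2 / 2
            = (L₂ * ‖v‖ ^ 3 / 2) * ∫ t in (0:ℝ)..1, t ^ 2 := by
          rw [← integral_const_mul]; congr 1; ext t; ring
        rw [this, integral_pow]
        rw [abs_of_nonneg (by positivity)]
        ring

set_option maxHeartbeats 1000000 in


/-- Theorem 4: Comparison with Euclidean projection under
training error. With A1–A2, a gradient bound `G` on `𝒮`, and a learned
symmetric weighting `Ŵ` with `‖Ŵ − W‖ ≤ ρ < μ²`, the learned weighted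
projection `û_W` satisfies
`Q(û_W) − Q(u_I) ≥ c·δ² − L₂D³/(3μ³) − G√(2ρ)D/μ²`. -/
theorem learned_weighted_vs_euclidean_gap
    (m : ℕ)
    (Q : EuclideanSpace ℝ (Fin m) → ℝ)
    (hQ : ContDiff ℝ 2 Q)
    (u_ref : EuclideanSpace ℝ (Fin m))
    (H : EuclideanSpace ℝ (Fin m) →
      EuclideanSpace ℝ (Fin m) →L[ℝ] EuclideanSpace ℝ (Fin m) →L[ℝ] ℝ)
    (hH : ∀ u, H u = fderiv ℝ (fderiv ℝ Q) u)
    (L₂ : ℝ) (hL₂ : 0 < L₂)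
    (hLip : ∀ u v, ‖H u - H v‖ ≤ L₂ * ‖u - v‖)
    (hgrad : fderiv ℝ Q u_ref = 0)
    (W : EuclideanSpace ℝ (Fin m) →L[ℝ] EuclideanSpace ℝ (Fin m) →L[ℝ] ℝ)
    (hW : W = -H u_ref)
    (D : ℝ) (hD : 0 < D)
    (S : Set (EuclideanSpace ℝ (Fin m)))
    (hS : S = {u | W (u - u_ref) (u - u_ref) ≤ D ^ 2})
    (μ : ℝ) (hμ : 0 < μ)
    (hcurv : ∀ u ∈ S, ∀ v : EuclideanSpace ℝ (Fin m),
      H u v v ≤ -μ ^ 2 * ‖v‖ ^ 2)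
    (G : ℝ) (hG0 : 0 ≤ G)
    (hGbound : ∀ u ∈ S, ‖fderiv ℝ Q u‖ ≤ G)
    (𝒰 : Set (EuclideanSpace ℝ (Fin m))) (h𝒰 : Convex ℝ 𝒰)
    (uW uI uhW : EuclideanSpace ℝ (Fin m))
    (huW𝒰 : uW ∈ 𝒰) (huI𝒰 : uI ∈ 𝒰) (huhW𝒰 : uhW ∈ 𝒰)
    (huWmin : ∀ u ∈ 𝒰, W (uW - u_ref) (uW - u_ref) ≤ W (u - u_ref) (u - u_ref))
    (Wh : EuclideanSpace ℝ (Fin m) →L[ℝ] EuclideanSpace ℝ (Fin m) →L[ℝ] ℝ)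
    (hWhsym : ∀ v w : EuclideanSpace ℝ (Fin m), Wh v w = Wh w v)
    (ρ : ℝ) (hρ0 : 0 ≤ ρ) (hρμ : ρ < μ ^ 2)
    (herr : ‖Wh - W‖ ≤ ρ)
    (huhWmin : ∀ u ∈ 𝒰,
      Wh (uhW - u_ref) (uhW - u_ref) ≤ Wh (u - u_ref) (u - u_ref))
    (huWS : uW ∈ S) (huhWS : uhW ∈ S) (huIS : uI ∈ S)
    (hseg : segment ℝ uW uhW ⊆ S)
    (δ : ℝ) (hδ : δ = Real.sqrt (W (uW - u_ref) (uW - u_ref)))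
    (hδpos : 0 < δ)
    (β : ℝ) (hβ : 1 < β)
    (hβδ : Real.sqrt (W (uI - u_ref) (uI - u_ref)) = β * δ)
    (c : ℝ) (hc : c = (β ^ 2 - 1) / 2) :
    Q uhW - Q uI ≥
      c * δ ^ 2 - L₂ * D ^ 3 / (3 * μ ^ 3)
        - G * Real.sqrt (2 * ρ) * D / μ ^ 2 := by
  have hQdiff : Differentiable ℝ Q := hQ.differentiable two_ne_zero
  have hWHval : ∀ a b : EuclideanSpace ℝ (Fin m), W a b = -(H u_ref a b) := by
    intro a b; rw [hW]; simp
  -- u_ref ∈ S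
  have hrefS : u_ref ∈ S := by rw [hS]; simp; positivity
  -- ellipticity
  have hell : ∀ v : EuclideanSpace ℝ (Fin m), μ ^ 2 * ‖v‖ ^ 2 ≤ W v v := by
    intro v
    have := hcurv u_ref hrefS v
    rw [hWHval]; linarith
  have hellnn : ∀ v : EuclideanSpace ℝ (Fin m), 0 ≤ W v v := fun v => le_trans (by positivity) (hell v)
  -- symmetry of W
  have hFdiff : Differentiable ℝ (fderiv ℝ Q) :=
    (hQ.fderiv_right (by norm_num)).differentiable one_ne_zero
  have hWsymm : ∀ a b : EuclideanSpace ℝ (Fin m), W a b = W b a := by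
    intro a b
    have hx : HasFDerivAt (fderiv ℝ Q) (H u_ref) u_ref := by
      have := (hFdiff u_ref).hasFDerivAt
      rw [← hH] at this; exact this
    have hs := second_derivative_symmetric (fun y => (hQdiff y).hasFDerivAt) hx a b
    rw [hWHval, hWHval, hs]
  -- norm bound on S
  have hnormS : ∀ u ∈ S, ‖u - u_ref‖ ≤ D / μ := by
    intro u hu
    rw [hS] at hu
    have h1 := hell (u - u_ref)
    have h2 : (‖u - u_ref‖ * μ) ^ 2 ≤ D ^ 2 := by
      calc (‖u - u_ref‖ * μ) ^ 2 = μ ^ 2 * ‖u - u_ref‖ ^ 2 := by ring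
        _ ≤ D ^ 2 := le_trans h1 hu
    rw [le_div_iff₀ hμ]
    calc ‖u - u_ref‖ * μ = Real.sqrt ((‖u - u_ref‖ * μ) ^ 2) :=
          (Real.sqrt_sq (by positivity)).symm
      _ ≤ Real.sqrt (D ^ 2) := Real.sqrt_le_sqrt h2
      _ = D := Real.sqrt_sq hD.le
  -- Taylor with W
  have htay : ∀ u : EuclideanSpace ℝ (Fin m), |Q u - Q u_ref + (1/2) * W (u - u_ref) (u - u_ref)|
      ≤ L₂ / 6 * ‖u - u_ref‖ ^ 3 := by
    intro u
    have := taylor_two_bound Q hQ u_ref H hH L₂ hL₂.le hLip hgrad u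
    rw [hWHval]
    convert this using 2
    ring
  set T : ℝ := L₂ / 6 * (D / μ) ^ 3 with hT
  have htayS : ∀ u ∈ S, |Q u - Q u_ref + (1/2) * W (u - u_ref) (u - u_ref)| ≤ T := by
    intro u hu
    refine (htay u).trans ?_
    rw [hT]
    exact mul_le_mul_of_nonneg_left
      (pow_le_pow_left₀ (norm_nonneg _) (hnormS u hu) 3) (by positivity)
  -- values of the quadratic at uW and uI
  have hfW : W (uW - u_ref) (uW - u_ref) = δ ^ 2 := by
    rw [hδ, Real.sq_sqrt (hellnn _)]
  have hfI : W (uI - u_ref) (uI - u_ref) = β ^ 2 * δ ^ 2 := by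
    have h0 := hellnn (uI - u_ref)
    have h1 := congrArg (· ^ 2) hβδ
    rw [Real.sq_sqrt h0] at h1
    rw [h1]; ring
  -- Taylor comparison between uW and uI
  have hTW := htayS uW huWS
  have hTI := htayS uI huIS
  rw [hfW] at hTW
  rw [hfI] at hTI
  have hcomp : Q uW - Q uI ≥ c * δ ^ 2 - 2 * T := by
    rw [hc]
    rw [abs_le] at hTW hTI
    linarith [hTW.1, hTW.2, hTI.1, hTI.2]
  -- first-order optimality of uW
  set d : EuclideanSpace ℝ (Fin m) := uhW - uW with hd
  set a : ℝ := W (uW - u_ref) d + W d (uW - u_ref) with ha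
  set q : ℝ := W d d with hq
  have hqnn : 0 ≤ q := hellnn d
  have hexp : ∀ t : ℝ, W (uW + t • d - u_ref) (uW + t • d - u_ref)
      = W (uW - u_ref) (uW - u_ref) + t * a + t ^ 2 * q := by
    intro t
    have heq : uW + t • d - u_ref = (uW - u_ref) + t • d := by abel
    rw [heq, ha, hq]
    simp only [map_add, map_smul, ContinuousLinearMap.add_apply,
      ContinuousLinearMap.smul_apply, smul_eq_mul]
    ring
  have hanonneg : 0 ≤ a := by
    by_contra hneg
    push_neg at hneg
    set t₀ : ℝ := min 1 ((-a) / (2 * q + 1)) with ht₀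
    have ht₀pos : 0 < t₀ := lt_min one_pos (div_pos (by linarith) (by linarith))
    have ht₀le1 : t₀ ≤ 1 := min_le_left _ _
    have hmem : uW + t₀ • d ∈ 𝒰 := by
      have := h𝒰 huW𝒰 huhW𝒰 (by linarith : (0:ℝ) ≤ 1 - t₀) ht₀pos.le (by ring)
      convert this using 1
      rw [hd]
      module
    have hineq := huWmin _ hmem
    rw [hexp t₀] at hineq
    have h0 : 0 ≤ t₀ * (a + t₀ * q) := by
      have : t₀ * a + t₀ ^ 2 * q = t₀ * (a + t₀ * q) := by ring
      linarith [hineq, this.symm.le, this.le]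
    have h1 : 0 ≤ a + t₀ * q := (mul_nonneg_iff_of_pos_left ht₀pos).mp h0
    have h2 : t₀ * (2 * q + 1) ≤ -a := by
      have := min_le_right 1 ((-a) / (2 * q + 1))
      calc t₀ * (2 * q + 1) ≤ ((-a) / (2 * q + 1)) * (2 * q + 1) := by
            apply mul_le_mul_of_nonneg_right (min_le_right _ _); positivity
        _ = -a := by field_simp
    have h3 : t₀ * (2 * q + 1) = 2 * (t₀ * q) + t₀ := by ring
    have h4 : 0 ≤ t₀ * q := mul_nonneg ht₀pos.le hqnn
    linarith
  have hlower : W (uW - u_ref) (uW - u_ref) + q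
      ≤ W (uhW - u_ref) (uhW - u_ref) := by
    have := hexp 1
    simp only [one_smul, one_pow, one_mul] at this
    have heq : uW + d = uhW := by rw [hd]; abel
    rw [heq] at this
    linarith
  -- perturbation bound
  have habs : ∀ v : EuclideanSpace ℝ (Fin m), |W v v - Wh v v| ≤ ρ * ‖v‖ ^ 2 := by
    intro v
    have h1 : W v v - Wh v v = ((W - Wh) v) v := by
      simp [ContinuousLinearMap.sub_apply]
    rw [h1, ← Real.norm_eq_abs]
    have hρ' : ‖W - Wh‖ ≤ ρ := le_of_eq_of_le (norm_sub_rev W Wh) herr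
    calc ‖((W - Wh) v) v‖ ≤ ‖(W - Wh) v‖ * ‖v‖ := ((W - Wh) v).le_opNorm v
      _ ≤ ‖W - Wh‖ * ‖v‖ * ‖v‖ :=
          mul_le_mul_of_nonneg_right ((W - Wh).le_opNorm v) (norm_nonneg v)
      _ ≤ ρ * ‖v‖ * ‖v‖ :=
          mul_le_mul_of_nonneg_right
            (mul_le_mul_of_nonneg_right hρ' (norm_nonneg v)) (norm_nonneg v)
      _ = ρ * ‖v‖ ^ 2 := by ring
  have hWhle := huhWmin uW huW𝒰
  have hupper : W (uhW - u_ref) (uhW - u_ref) - W (uW - u_ref) (uW - u_ref)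
      ≤ ρ * ‖uhW - u_ref‖ ^ 2 + ρ * ‖uW - u_ref‖ ^ 2 := by
    have h1 := abs_le.1 (habs (uhW - u_ref))
    have h2 := abs_le.1 (habs (uW - u_ref))
    linarith
  -- norm of d
  have hqle : q ≤ 2 * ρ * D ^ 2 / μ ^ 2 := by
    have hnh := hnormS uhW huhWS
    have hnw := hnormS uW huWS
    have e1 : ρ * ‖uhW - u_ref‖ ^ 2 ≤ ρ * (D / μ) ^ 2 :=
      mul_le_mul_of_nonneg_left (pow_le_pow_left₀ (norm_nonneg _) hnh 2) hρ0
    have e2 : ρ * ‖uW - u_ref‖ ^ 2 ≤ ρ * (D / μ) ^ 2 :=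
      mul_le_mul_of_nonneg_left (pow_le_pow_left₀ (norm_nonneg _) hnw 2) hρ0
    have : q ≤ 2 * (ρ * (D / μ) ^ 2) := by linarith
    calc q ≤ 2 * (ρ * (D / μ) ^ 2) := this
      _ = 2 * ρ * D ^ 2 / μ ^ 2 := by field_simp
  have hdbound : ‖d‖ ≤ Real.sqrt (2 * ρ) * D / μ ^ 2 := by
    have h1 : μ ^ 2 * ‖d‖ ^ 2 ≤ 2 * ρ * D ^ 2 / μ ^ 2 := le_trans (hell d) hqle
    have h2 : ‖d‖ ^ 2 ≤ 2 * ρ * D ^ 2 / μ ^ 4 := by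
      rw [le_div_iff₀ (by positivity : (0:ℝ) < μ ^ 2)] at h1
      rw [le_div_iff₀ (by positivity : (0:ℝ) < μ ^ 4)]
      calc ‖d‖ ^ 2 * μ ^ 4 = μ ^ 2 * ‖d‖ ^ 2 * μ ^ 2 := by ring
        _ ≤ 2 * ρ * D ^ 2 := h1
    have h3 : (Real.sqrt (2 * ρ) * D / μ ^ 2) ^ 2 = 2 * ρ * D ^ 2 / μ ^ 4 := by
      rw [div_pow, mul_pow, Real.sq_sqrt (by positivity)]
      ring
    calc ‖d‖ = Real.sqrt (‖d‖ ^ 2) := (Real.sqrt_sq (norm_nonneg d)).symm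
      _ ≤ Real.sqrt ((Real.sqrt (2 * ρ) * D / μ ^ 2) ^ 2) := by
          apply Real.sqrt_le_sqrt; rw [h3]; exact h2
      _ = Real.sqrt (2 * ρ) * D / μ ^ 2 := Real.sqrt_sq (by positivity)
  -- mean value on the segment
  have hmv : ‖Q uhW - Q uW‖ ≤ G * ‖uhW - uW‖ :=
    Convex.norm_image_sub_le_of_norm_fderiv_le
      (fun x _ => hQdiff.differentiableAt)
      (fun x hx => hGbound x (hseg hx))
      (convex_segment uW uhW)
      (left_mem_segment ℝ uW uhW) (right_mem_segment ℝ uW uhW)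
  have hmv' : Q uhW - Q uW ≥ - (G * (Real.sqrt (2 * ρ) * D / μ ^ 2)) := by
    have h1 : |Q uhW - Q uW| ≤ G * ‖d‖ := by rw [← Real.norm_eq_abs]; exact hmv
    have h2 : G * ‖d‖ ≤ G * (Real.sqrt (2 * ρ) * D / μ ^ 2) :=
      mul_le_mul_of_nonneg_left hdbound hG0
    have := (abs_le.1 h1).1
    linarith
  -- final combination
  have h2T : 2 * T = L₂ * D ^ 3 / (3 * μ ^ 3) := by
    rw [hT, div_pow]
    field_simp
    ring
  have hfinal : Q uhW - Q uI = (Q uW - Q uI) + (Q uhW - Q uW) := by ring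
  rw [hfinal]
  have : G * Real.sqrt (2 * ρ) * D / μ ^ 2 = G * (Real.sqrt (2 * ρ) * D / μ ^ 2) := by ring
  rw [this]
  linarith [hcomp, hmv', h2T.ge, h2T.le]
end

section
/- Under the hypotheses of the training-error comparison theorem — E = EuclideanSpace ℝ (Fin m); Q : E → ℝ twice continuously differentiable with Hessian H L₂-Lipschitz in operator norm and ∇Q(u_ref) = 0; W := −H(u_ref); 𝒮 := {u : W(u − u_ref, u − u_ref) ≤ D²}, D > 0; H(u)(v,v) ≤ −μ²·‖v‖² for all u ∈ 𝒮, μ > 0; ‖∇Q(u)‖ ≤ G on 𝒮; 𝒰 ⊆ E convex; u_W minimizing W(u − u_ref, u − u_ref) over 𝒰; û_W minimizing Ŵ(u − u_ref, u − u_ref) over 𝒰 with ‖Ŵ − W‖ ≤ ρ, 0 ≤ ρ < μ²; u_I ∈ 𝒰; u_W, û_W, u_I ∈ 𝒮 with the segment from u_W to û_W in 𝒮; δ := ‖u_W − u_ref‖_W > 0; ‖u_I − u_ref‖_W = β·δ with β > 1; c := (β² − 1)/2 — if additionally G·√(2ρ)·D/μ² + L₂·D³/(3·μ³) ≤ c·δ²,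 then Q(û_W) ≥ Q(u_I); i.e., the learned Hessian-weighted projection still outperforms the Euclidean projection despite training error. -/
set_option maxHeartbeats 2000000

open Set

lemma aux_taylor2 {E : Type*} [NormedAddCommGroup E] [NormedSpace ℝ E]
    (Q : E → ℝ) (hQ : ContDiff ℝ 2 Q) (L₂ : ℝ) (hL₂ : 0 ≤ L₂)
    (hLip : ∀ u v, ‖fderiv ℝ (fderiv ℝ Q) u - fderiv ℝ (fderiv ℝ Q) v‖ ≤ L₂ * ‖u - v‖)
    (x : E) (hgrad : fderiv ℝ Q x = 0) (v : E) :
    |Q (x + v) - Q x - (1/2) * fderiv ℝ (fderiv ℝ Q) x v v| ≤ L₂ * ‖v‖ ^ 3 / 6 := by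
  set H := fderiv ℝ (fderiv ℝ Q) with hHdef
  have hQ1 : ContDiff ℝ 1 (fderiv ℝ Q) := hQ.fderiv_right (by norm_num)
  have hdQ : Differentiable ℝ Q := hQ.differentiable (by norm_num)
  have hdH : ∀ u, HasFDerivAt (fderiv ℝ Q) (H u) u :=
    fun u => ((hQ1.differentiable (by norm_num)) u).hasFDerivAt
  have hline : ∀ t : ℝ, HasDerivAt (fun t : ℝ => x + t • v) v t := by
    intro t
    simpa using ((hasDerivAt_id t).smul_const v).const_add x
  set g1 : ℝ → ℝ := fun t => fderiv ℝ Q (x + t • v) v - t * (H x v v) with hg1def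
  have hg1' : ∀ t : ℝ, HasDerivAt g1 (H (x + t • v) v v - H x v v) t := by
    intro t
    have h1 : HasDerivAt (fun t : ℝ => fderiv ℝ Q (x + t • v)) (H (x + t • v) v) t :=
      (hdH (x + t • v)).comp_hasDerivAt t (hline t)
    have h2 : HasDerivAt (fun t : ℝ => fderiv ℝ Q (x + t • v) v) (H (x + t • v) v v) t := by
      simpa using h1.clm_apply (hasDerivAt_const t v)
    exact h2.sub (hasDerivAt_mul_const (H x v v))
  -- step A
  have hBd1 : ∀ t : ℝ, HasDerivAt (fun t : ℝ => t ^ 2 * (L₂ * ‖v‖ ^ 3 / 2))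
      (L₂ * ‖v‖ ^ 3 * t) t := by
    intro t
    have := (hasDerivAt_pow 2 t).mul_const (L₂ * ‖v‖ ^ 3 / 2)
    refine this.congr_deriv ?_
    push_cast; ring
  have hbound1 : ∀ t ∈ Ico (0:ℝ) 1, ‖H (x + t • v) v v - H x v v‖ ≤ L₂ * ‖v‖ ^ 3 * t := by
    intro t ht
    have h3 : ‖(H (x + t • v) - H x) v v‖ ≤ ‖H (x + t • v) - H x‖ * ‖v‖ * ‖v‖ :=
      (H (x + t • v) - H x).le_opNorm₂ v v
    have h4 : ‖H (x + t • v) - H x‖ ≤ L₂ * (t * ‖v‖) := by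
      have := hLip (x + t • v) x
      simpa [norm_smul, abs_of_nonneg ht.1] using this
    have h5 : H (x + t • v) v v - H x v v = (H (x + t • v) - H x) v v := by
      simp [ContinuousLinearMap.sub_apply]
    rw [h5]
    calc ‖(H (x + t • v) - H x) v v‖ ≤ ‖H (x + t • v) - H x‖ * ‖v‖ * ‖v‖ := h3
      _ ≤ L₂ * (t * ‖v‖) * ‖v‖ * ‖v‖ := by
          have h6 : (0:ℝ) ≤ ‖v‖ := norm_nonneg v
          gcongr
      _ = L₂ * ‖v‖ ^ 3 * t := by ring
  have hA := image_norm_le_of_norm_deriv_right_le_deriv_boundary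
    (f := g1) (a := 0) (b := 1)
    (f' := fun t => H (x + t • v) v v - H x v v)
    (B := fun t => t ^ 2 * (L₂ * ‖v‖ ^ 3 / 2)) (B' := fun t => L₂ * ‖v‖ ^ 3 * t)
    (Continuous.continuousOn (continuous_iff_continuousAt.2 fun t => (hg1' t).continuousAt))
    (fun t _ => (hg1' t).hasDerivWithinAt)
    (by simp [hg1def, hgrad]) hBd1 hbound1
  -- step B
  set φ : ℝ → ℝ := fun t => Q (x + t • v) - Q x - t ^ 2 * (H x v v / 2) with hφdef
  have hφ' : ∀ t : ℝ, HasDerivAt φ (g1 t) t := by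
    intro t
    have h1 : HasDerivAt (fun t : ℝ => Q (x + t • v)) (fderiv ℝ Q (x + t • v) v) t :=
      (hdQ (x + t • v)).hasFDerivAt.comp_hasDerivAt t (hline t)
    have h2 : HasDerivAt (fun t : ℝ => t ^ 2 * (H x v v / 2)) (t * (H x v v)) t := by
      have := (hasDerivAt_pow 2 t).mul_const (H x v v / 2)
      refine this.congr_deriv ?_
      push_cast; ring
    exact (h1.sub_const (Q x)).sub h2
  have hBd2 : ∀ t : ℝ, HasDerivAt (fun t : ℝ => t ^ 3 * (L₂ * ‖v‖ ^ 3 / 6))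
      (t ^ 2 * (L₂ * ‖v‖ ^ 3 / 2)) t := by
    intro t
    have := (hasDerivAt_pow 3 t).mul_const (L₂ * ‖v‖ ^ 3 / 6)
    refine this.congr_deriv ?_
    push_cast; ring
  have hB := image_norm_le_of_norm_deriv_right_le_deriv_boundary
    (f := φ) (a := 0) (b := 1) (f' := g1)
    (B := fun t => t ^ 3 * (L₂ * ‖v‖ ^ 3 / 6)) (B' := fun t => t ^ 2 * (L₂ * ‖v‖ ^ 3 / 2))
    (Continuous.continuousOn (continuous_iff_continuousAt.2 fun t => (hφ' t).continuousAt))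
    (fun t _ => (hφ' t).hasDerivWithinAt)
    (by simp [hφdef]) hBd2
    (fun t ht => hA ⟨ht.1, le_of_lt ht.2⟩)
  have h1 := hB (right_mem_Icc.2 zero_le_one)
  have heq : Q (x + v) - Q x - (1/2) * H x v v = φ 1 := by
    simp only [hφdef, one_smul, one_pow]
    ring
  rw [heq, ← Real.norm_eq_abs]
  calc ‖φ 1‖ ≤ (1:ℝ) ^ 3 * (L₂ * ‖v‖ ^ 3 / 6) := h1
    _ = L₂ * ‖v‖ ^ 3 / 6 := by ring

lemma aux_opt {E : Type*} [NormedAddCommGroup E] [NormedSpace ℝ E]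
    (W : E →L[ℝ] E →L[ℝ] ℝ) (hpos : ∀ d : E, 0 ≤ W d d)
    {𝒰 : Set E} (h𝒰 : Convex ℝ 𝒰) {x₀ a b : E} (ha : a ∈ 𝒰) (hb : b ∈ 𝒰)
    (hmin : ∀ u ∈ 𝒰, W (a - x₀) (a - x₀) ≤ W (u - x₀) (u - x₀)) :
    W (a - x₀) (a - x₀) + W (b - a) (b - a) ≤ W (b - x₀) (b - x₀) := by
  set va := a - x₀ with hva
  set d := b - a with hd
  have hexp : ∀ t : ℝ, W (va + t • d) (va + t • d)
      = W va va + t * (W va d + W d va) + t ^ 2 * W d d := by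
    intro t
    simp [map_add, map_smul, ContinuousLinearMap.add_apply,
      ContinuousLinearMap.smul_apply, smul_eq_mul]
    ring
  have hkey : ∀ t ∈ Ioc (0:ℝ) 1, 0 ≤ (W va d + W d va) + t * W d d := by
    intro t ht
    have hmem : a + t • (b - a) ∈ 𝒰 := h𝒰.add_smul_sub_mem ha hb ⟨le_of_lt ht.1, ht.2⟩
    have h0 := hmin _ hmem
    have heq : a + t • (b - a) - x₀ = va + t • d := by rw [hva, hd]; abel
    rw [heq, hexp] at h0
    have h7 : t * 0 ≤ t * ((W va d + W d va) + t * W d d) := by nlinarith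
    exact le_of_mul_le_mul_left h7 ht.1
  have hs : 0 ≤ W va d + W d va := by
    by_contra hneg
    push_neg at hneg
    set s := W va d + W d va with hsdef
    set q := W d d with hqdef
    have hq : 0 ≤ q := hpos d
    have hq1 : (0:ℝ) < q + 1 := by linarith
    set t := min 1 (-s / (q + 1)) with htdef
    have htpos : 0 < t := lt_min one_pos (div_pos (by linarith) hq1)
    have hkey' := hkey t ⟨htpos, min_le_left _ _⟩
    have h1 : t ≤ -s / (q + 1) := min_le_right _ _
    have h3 : t * (q + 1) ≤ -s := (le_div_iff₀ hq1).1 h1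
    nlinarith
  have heq2 : b - x₀ = va + (1:ℝ) • d := by rw [one_smul, hva, hd]; abel
  rw [heq2, hexp 1]
  nlinarith


/-- Sufficient condition for the learned Hessian-weighted
projection to still outperform the Euclidean projection despite training
error: if `G√(2ρ)D/μ² + L₂D³/(3μ³) ≤ c·δ²`, then `Q(û_W) ≥ Q(u_I)`. -/
theorem learned_weighted_beats_euclidean
    (m : ℕ)
    (Q : EuclideanSpace ℝ (Fin m) → ℝ)
    (hQ : ContDiff ℝ 2 Q)
    (u_ref : EuclideanSpace ℝ (Fin m))
    (H : EuclideanSpace ℝ (Fin m) →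
      EuclideanSpace ℝ (Fin m) →L[ℝ] EuclideanSpace ℝ (Fin m) →L[ℝ] ℝ)
    (hH : ∀ u, H u = fderiv ℝ (fderiv ℝ Q) u)
    (L₂ : ℝ) (hL₂ : 0 < L₂)
    (hLip : ∀ u v, ‖H u - H v‖ ≤ L₂ * ‖u - v‖)
    (hgrad : fderiv ℝ Q u_ref = 0)
    (W : EuclideanSpace ℝ (Fin m) →L[ℝ] EuclideanSpace ℝ (Fin m) →L[ℝ] ℝ)
    (hW : W = -H u_ref)
    (D : ℝ) (hD : 0 < D)
    (S : Set (EuclideanSpace ℝ (Fin m)))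
    (hS : S = {u | W (u - u_ref) (u - u_ref) ≤ D ^ 2})
    (μ : ℝ) (hμ : 0 < μ)
    (hcurv : ∀ u ∈ S, ∀ v : EuclideanSpace ℝ (Fin m),
      H u v v ≤ -μ ^ 2 * ‖v‖ ^ 2)
    (G : ℝ) (hG0 : 0 ≤ G)
    (hGbound : ∀ u ∈ S, ‖fderiv ℝ Q u‖ ≤ G)
    (𝒰 : Set (EuclideanSpace ℝ (Fin m))) (h𝒰 : Convex ℝ 𝒰)
    (uW uI uhW : EuclideanSpace ℝ (Fin m))
    (huW𝒰 : uW ∈ 𝒰) (huI𝒰 : uI ∈ 𝒰) (huhW𝒰 : uhW ∈ 𝒰)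
    (huWmin : ∀ u ∈ 𝒰, W (uW - u_ref) (uW - u_ref) ≤ W (u - u_ref) (u - u_ref))
    (Wh : EuclideanSpace ℝ (Fin m) →L[ℝ] EuclideanSpace ℝ (Fin m) →L[ℝ] ℝ)
    (hWhsym : ∀ v w : EuclideanSpace ℝ (Fin m), Wh v w = Wh w v)
    (ρ : ℝ) (hρ0 : 0 ≤ ρ) (hρμ : ρ < μ ^ 2)
    (herr : ‖Wh - W‖ ≤ ρ)
    (huhWmin : ∀ u ∈ 𝒰,
      Wh (uhW - u_ref) (uhW - u_ref) ≤ Wh (u - u_ref) (u - u_ref))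
    (huWS : uW ∈ S) (huhWS : uhW ∈ S) (huIS : uI ∈ S)
    (hseg : segment ℝ uW uhW ⊆ S)
    (δ : ℝ) (hδ : δ = Real.sqrt (W (uW - u_ref) (uW - u_ref)))
    (hδpos : 0 < δ)
    (β : ℝ) (hβ : 1 < β)
    (hβδ : Real.sqrt (W (uI - u_ref) (uI - u_ref)) = β * δ)
    (c : ℝ) (hc : c = (β ^ 2 - 1) / 2)
    (hcond : G * Real.sqrt (2 * ρ) * D / μ ^ 2
        + L₂ * D ^ 3 / (3 * μ ^ 3) ≤ c * δ ^ 2) :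
    Q uhW ≥ Q uI := by
  
  have hrefS : u_ref ∈ S := by
    rw [hS]
    simp only [Set.mem_setOf_eq, sub_self, map_zero, ContinuousLinearMap.zero_apply]
    positivity
  have hWpos : ∀ z, μ ^ 2 * ‖z‖ ^ 2 ≤ W z z := by
    intro z
    have h1 := hcurv u_ref hrefS z
    rw [hW]
    simp only [ContinuousLinearMap.neg_apply]
    linarith
  have hWnn : ∀ z, 0 ≤ W z z := fun z => le_trans (by positivity) (hWpos z)
  have hnormS : ∀ u ∈ S, ‖u - u_ref‖ ≤ D / μ := by
    intro u hu
    rw [hS] at hu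
    simp only [Set.mem_setOf_eq] at hu
    have h1 := hWpos (u - u_ref)
    rw [le_div_iff₀ hμ]
    have hsq : (‖u - u_ref‖ * μ) ^ 2 ≤ D ^ 2 := by nlinarith
    have h2 := Real.sqrt_le_sqrt hsq
    rwa [Real.sqrt_sq (by positivity), Real.sqrt_sq hD.le] at h2
  have hδ2 : W (uW - u_ref) (uW - u_ref) = δ ^ 2 := by
    rw [hδ, Real.sq_sqrt (hWnn _)]
  have hβδ2 : W (uI - u_ref) (uI - u_ref) = (β * δ) ^ 2 := by
    rw [← hβδ, Real.sq_sqrt (hWnn _)]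
  have hLip' : ∀ u v, ‖fderiv ℝ (fderiv ℝ Q) u - fderiv ℝ (fderiv ℝ Q) v‖ ≤ L₂ * ‖u - v‖ := by
    intro u v
    have := hLip u v
    rwa [hH u, hH v] at this
  have htay : ∀ u : EuclideanSpace ℝ (Fin m),
      |Q u - Q u_ref + (1/2) * W (u - u_ref) (u - u_ref)| ≤ L₂ * ‖u - u_ref‖ ^ 3 / 6 := by
    intro u
    have h1 := aux_taylor2 Q hQ L₂ (le_of_lt hL₂) hLip' u_ref hgrad (u - u_ref)
    rw [add_sub_cancel] at h1
    have h2 : fderiv ℝ (fderiv ℝ Q) u_ref (u - u_ref) (u - u_ref)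
        = - W (u - u_ref) (u - u_ref) := by
      rw [hW, ← hH u_ref]
      simp [ContinuousLinearMap.neg_apply]
    rw [h2] at h1
    convert h1 using 2
    ring
  have hcube : ∀ u ∈ S, L₂ * ‖u - u_ref‖ ^ 3 / 6 ≤ L₂ * D ^ 3 / (6 * μ ^ 3) := by
    intro u hu
    have h1 : ‖u - u_ref‖ ^ 3 ≤ (D / μ) ^ 3 :=
      pow_le_pow_left₀ (norm_nonneg _) (hnormS u hu) 3
    calc L₂ * ‖u - u_ref‖ ^ 3 / 6 ≤ L₂ * (D / μ) ^ 3 / 6 := by gcongr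
      _ = L₂ * D ^ 3 / (6 * μ ^ 3) := by field_simp
  -- bounds from Taylor
  have tW := abs_le.1 (htay uW)
  have tI := abs_le.1 (htay uI)
  have tWb := hcube uW huWS
  have tIb := hcube uI huIS
  -- distance bound between uhW and uW
  have herr' : ∀ z, |Wh z z - W z z| ≤ ρ * ‖z‖ ^ 2 := by
    intro z
    have h1 : Wh z z - W z z = (Wh - W) z z := by
      simp [ContinuousLinearMap.sub_apply]
    rw [h1, ← Real.norm_eq_abs]
    calc ‖(Wh - W) z z‖ ≤ ‖Wh - W‖ * ‖z‖ * ‖z‖ := (Wh - W).le_opNorm₂ z z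
      _ ≤ ρ * ‖z‖ ^ 2 := by nlinarith [norm_nonneg z, norm_nonneg (Wh - W)]
  have hopt := aux_opt W hWnn h𝒰 huW𝒰 huhW𝒰 huWmin
  have hd2 : μ ^ 2 * (μ ^ 2 * ‖uhW - uW‖ ^ 2) ≤ 2 * ρ * D ^ 2 := by
    have h1 := hWpos (uhW - uW)
    have h2 := abs_le.1 (herr' (uhW - u_ref))
    have h3 := huhWmin uW huW𝒰
    have h4 := abs_le.1 (herr' (uW - u_ref))
    have h5 : ‖uhW - u_ref‖ ≤ D / μ := hnormS uhW huhWS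
    have h6 : ‖uW - u_ref‖ ≤ D / μ := hnormS uW huWS
    have ha : μ ^ 2 * ‖uhW - uW‖ ^ 2 ≤ ρ * (‖uhW - u_ref‖ ^ 2 + ‖uW - u_ref‖ ^ 2) := by
      linarith
    have hSuh : W (uhW - u_ref) (uhW - u_ref) ≤ D ^ 2 := by rw [hS] at huhWS; exact huhWS
    have hSuW : W (uW - u_ref) (uW - u_ref) ≤ D ^ 2 := by rw [hS] at huWS; exact huWS
    have hb : μ ^ 2 * ‖uhW - u_ref‖ ^ 2 ≤ D ^ 2 := le_trans (hWpos _) hSuh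
    have hc' : μ ^ 2 * ‖uW - u_ref‖ ^ 2 ≤ D ^ 2 := le_trans (hWpos _) hSuW
    have k1 : μ ^ 2 * (μ ^ 2 * ‖uhW - uW‖ ^ 2)
        ≤ μ ^ 2 * (ρ * (‖uhW - u_ref‖ ^ 2 + ‖uW - u_ref‖ ^ 2)) :=
      mul_le_mul_of_nonneg_left ha (by positivity)
    have k2 : ρ * (μ ^ 2 * ‖uhW - u_ref‖ ^ 2) ≤ ρ * D ^ 2 := mul_le_mul_of_nonneg_left hb hρ0
    have k3 : ρ * (μ ^ 2 * ‖uW - u_ref‖ ^ 2) ≤ ρ * D ^ 2 := mul_le_mul_of_nonneg_left hc' hρ0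
    have k4 : μ ^ 2 * (ρ * (‖uhW - u_ref‖ ^ 2 + ‖uW - u_ref‖ ^ 2))
        = ρ * (μ ^ 2 * ‖uhW - u_ref‖ ^ 2) + ρ * (μ ^ 2 * ‖uW - u_ref‖ ^ 2) := by ring
    linarith
  have hdnorm : ‖uhW - uW‖ ≤ Real.sqrt (2 * ρ) * D / μ ^ 2 := by
    have hsq : ‖uhW - uW‖ ^ 2 ≤ (Real.sqrt (2 * ρ) * D / μ ^ 2) ^ 2 := by
      rw [div_pow, mul_pow, Real.sq_sqrt (by positivity)]
      rw [le_div_iff₀ (by positivity : (0:ℝ) < (μ ^ 2) ^ 2)]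
      linarith [hd2]
    have := Real.sqrt_le_sqrt hsq
    rwa [Real.sqrt_sq (norm_nonneg _), Real.sqrt_sq (by positivity)] at this
  have hmvt : |Q uhW - Q uW| ≤ G * ‖uhW - uW‖ := by
    rw [← Real.norm_eq_abs]
    exact (convex_segment uW uhW).norm_image_sub_le_of_norm_fderiv_le
      (fun x _ => (hQ.differentiable (by norm_num)).differentiableAt)
      (fun x hx => hGbound x (hseg hx))
      (left_mem_segment ℝ uW uhW) (right_mem_segment ℝ uW uhW)
  have hmvt2 : Q uhW ≥ Q uW - G * (Real.sqrt (2 * ρ) * D / μ ^ 2) := by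
    have h1 := (abs_le.1 hmvt).1
    have h2 : G * ‖uhW - uW‖ ≤ G * (Real.sqrt (2 * ρ) * D / μ ^ 2) :=
      mul_le_mul_of_nonneg_left hdnorm hG0
    linarith
  -- final combination
  have e1 : G * Real.sqrt (2 * ρ) * D / μ ^ 2 = G * (Real.sqrt (2 * ρ) * D / μ ^ 2) := by
    ring
  have e2 : L₂ * D ^ 3 / (3 * μ ^ 3) = 2 * (L₂ * D ^ 3 / (6 * μ ^ 3)) := by
    ring
  have e3 : c * δ ^ 2 = (β * δ) ^ 2 / 2 - δ ^ 2 / 2 := by rw [hc]; ring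
  rw [hδ2] at tW
  rw [hβδ2] at tI
  rw [e1, e2, e3] at hcond
  linarith [tW.1, tW.2, tI.1, tI.2]
end
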